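/- arXiv:2201.13387 — 4 statements merged into one kernel-verified Lean document; each statement's English description precedes it below -/
import Mathlib

section
/- Suppose each f_i is convex and L_i-smooth and x* is a global minimizer of F (so ∇F(x*) = 0). Then for all x, w ∈ ℝ^d, V_e(p^IS; x, w) ≤ 4L̄(F(x) − F(x*)) + 2L̄·D(w), where D(w) = (1/n)∑_{i=1}^n (1/L_i)‖∇f_i(w) − ∇f_i(x*)‖². -/
open MeasureTheory Finset
open scoped RealInnerProductSpace BigOperators

abbrev Euc (d : ℕ) := EuclideanSpace ℝ (Fin d)

/-- The finite-sum objective `F(x) = (1/n) ∑ f i x`. -/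
noncomputable def avgF {d : ℕ} (n : ℕ) (f : Fin n → Euc d → ℝ) (x : Euc d) : ℝ :=
  (1 / (n : ℝ)) * ∑ i, f i x

/-- The gradient of the finite-sum objective, `∇F(x) = (1/n) ∑ ∇f i x`. -/
noncomputable def avgG {d : ℕ} (n : ℕ) (f' : Fin n → Euc d → Euc d) (x : Euc d) : Euc d :=
  (1 / (n : ℝ)) • ∑ i, f' i x

/-- The effective sampling variance `V_e(q; x, w)`. -/
noncomputable def Ve {d : ℕ} (n : ℕ) (f' : Fin n → Euc d → Euc d)
    (q : Fin n → ℝ) (x w : Euc d) : ℝ :=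
  (1 / (n : ℝ) ^ 2) * ∑ i, (1 / q i) * ‖f' i x - f' i w‖ ^ 2

/-- The average smoothness constant `L̄ = (1/n) ∑ L i`. -/
noncomputable def Lbar (n : ℕ) (L : Fin n → ℝ) : ℝ := (1 / (n : ℝ)) * ∑ i, L i

/-- The importance sampling distribution `p^IS_i = L i / (n L̄)`. -/
noncomputable def pIS (n : ℕ) (L : Fin n → ℝ) (i : Fin n) : ℝ :=
  L i / ((n : ℝ) * Lbar n L)

/-- `D(w) = (1/n) ∑ (1 / L i) ‖∇f i w - ∇f i x*‖²`. -/
noncomputable def Dfun {d : ℕ} (n : ℕ) (f' : Fin n → Euc d → Euc d) (L : Fin n → ℝ)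
    (xstar w : Euc d) : ℝ :=
  (1 / (n : ℝ)) * ∑ i, (1 / L i) * ‖f' i w - f' i xstar‖ ^ 2

lemma line_hasDerivAt {d : ℕ} (f : Euc d → ℝ) (f' : Euc d → Euc d)
    (hgrad : ∀ x, HasGradientAt f (f' x) x) (x v : Euc d) (t : ℝ) :
    HasDerivAt (fun t : ℝ => f (x + t • v)) ⟪f' (x + t • v), v⟫ t := by
  have hc : HasDerivAt (fun t : ℝ => x + t • v) v t := by
    simpa using ((hasDerivAt_id t).smul_const v).const_add x
  have := (hgrad (x + t • v)).hasFDerivAt.comp_hasDerivAt t hc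
  simpa [InnerProductSpace.toDual_apply_apply, Function.comp_def] using this

lemma descent {d : ℕ} (f : Euc d → ℝ) (f' : Euc d → Euc d) (L : ℝ) (hL : 0 < L)
    (hgrad : ∀ x, HasGradientAt f (f' x) x)
    (hsmooth : ∀ a b, ‖f' a - f' b‖ ≤ L * ‖a - b‖)
    (x z : Euc d) :
    f z ≤ f x + ⟪f' x, z - x⟫ + L / 2 * ‖z - x‖ ^ 2 := by
  set v := z - x with hv
  set h : ℝ → ℝ := fun t => f (x + t • v) - t * ⟪f' x, v⟫ - L / 2 * ‖v‖ ^ 2 * t ^ 2 with hh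
  have hd : ∀ t : ℝ, HasDerivAt h
      (⟪f' (x + t • v), v⟫ - ⟪f' x, v⟫ - L / 2 * ‖v‖ ^ 2 * (2 * t)) t := by
    intro t
    have h1 := line_hasDerivAt f f' hgrad x v t
    have h2 : HasDerivAt (fun t : ℝ => t * ⟪f' x, v⟫) ⟪f' x, v⟫ t := by
      simpa using (hasDerivAt_id t).mul_const (⟪f' x, v⟫)
    have h3 : HasDerivAt (fun t : ℝ => L / 2 * ‖v‖ ^ 2 * t ^ 2)
        (L / 2 * ‖v‖ ^ 2 * (2 * t)) t := by
      simpa [mul_comm] using (hasDerivAt_pow 2 t).const_mul (L / 2 * ‖v‖ ^ 2)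
    exact (h1.sub h2).sub h3
  have hanti : AntitoneOn h (Set.Icc (0:ℝ) 1) := by
    apply antitoneOn_of_deriv_nonpos (convex_Icc 0 1)
    · exact fun t _ => ((hd t).differentiableAt).continuousAt.continuousWithinAt
    · exact fun t _ => ((hd t).differentiableAt).differentiableWithinAt
    · intro t ht
      rw [interior_Icc] at ht
      rw [(hd t).deriv]
      have hb : ⟪f' (x + t • v) - f' x, v⟫ ≤ L * t * ‖v‖ ^ 2 := by
        calc ⟪f' (x + t • v) - f' x, v⟫ ≤ ‖f' (x + t • v) - f' x‖ * ‖v‖ :=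
              real_inner_le_norm _ _
          _ ≤ (L * ‖(x + t • v) - x‖) * ‖v‖ := by
              gcongr; exact hsmooth _ _
          _ = L * t * ‖v‖ ^ 2 := by
              rw [add_sub_cancel_left, norm_smul, Real.norm_eq_abs,
                abs_of_pos ht.1]; ring
      have : ⟪f' (x + t • v), v⟫ - ⟪f' x, v⟫ ≤ L * t * ‖v‖ ^ 2 := by
        rwa [← inner_sub_left]
      nlinarith [ht.1.le]
  have h10 : h 1 ≤ h 0 := hanti (by norm_num) (by norm_num) (by norm_num)
  simp only [hh, one_smul, zero_smul, add_zero, zero_mul, one_pow, mul_one,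
    mul_zero, sub_zero, zero_pow] at h10
  have hx : x + v = z := by rw [hv]; abel
  rw [hx] at h10
  linarith

lemma key_ineq {d : ℕ} (f : Euc d → ℝ) (f' : Euc d → Euc d) (L : ℝ) (hL : 0 < L)
    (hgrad : ∀ x, HasGradientAt f (f' x) x)
    (hconv : ∀ x y, f x + ⟪f' x, y - x⟫ ≤ f y)
    (hsmooth : ∀ a b, ‖f' a - f' b‖ ≤ L * ‖a - b‖)
    (x y : Euc d) :
    ‖f' x - f' y‖ ^ 2 ≤ 2 * L * (f x - f y - ⟪f' y, x - y⟫) := by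
  set u := f' x - f' y with hu
  set z := x - (1 / L) • u with hz
  have h1 := hconv y z
  have h2 := descent f f' L hL hgrad hsmooth x z
  have hzx : z - x = -((1 / L) • u) := by rw [hz]; abel
  have hzy : z - y = (x - y) - (1 / L) • u := by rw [hz]; abel
  have e1 : ⟪f' y, z - y⟫ = ⟪f' y, x - y⟫ - (1 / L) * ⟪f' y, u⟫ := by
    rw [hzy, inner_sub_right, real_inner_smul_right]
  have e2 : ⟪f' x, z - x⟫ = -((1 / L) * ⟪f' x, u⟫) := by
    rw [hzx, inner_neg_right, real_inner_smul_right]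
  have e3 : ‖z - x‖ ^ 2 = (1 / L) ^ 2 * ‖u‖ ^ 2 := by
    rw [hzx, norm_neg, norm_smul, Real.norm_eq_abs, abs_of_pos (by positivity), mul_pow]
  have e4 : ⟪f' x, u⟫ - ⟪f' y, u⟫ = ‖u‖ ^ 2 := by
    rw [← inner_sub_left, ← hu, real_inner_self_eq_norm_sq]
  rw [e1] at h1
  rw [e2, e3] at h2
  have hL' : L ≠ 0 := ne_of_gt hL
  have e4' : (1 / L) * ⟪f' x, u⟫ - (1 / L) * ⟪f' y, u⟫ = (1 / L) * ‖u‖ ^ 2 := by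
    rw [← mul_sub, e4]
  have e5 : L / 2 * ((1 / L) ^ 2 * ‖u‖ ^ 2) = (1 / L) * ‖u‖ ^ 2 / 2 := by
    field_simp
  have h3 : (1 / L) * ‖u‖ ^ 2 ≤ 2 * (f x - f y - ⟪f' y, x - y⟫) := by
    linarith [h1.trans h2, e4', e5.le, e5.ge]
  have h4 := mul_le_mul_of_nonneg_left h3 hL.le
  have e6 : L * ((1 / L) * ‖u‖ ^ 2) = ‖u‖ ^ 2 := by field_simp
  linarith [h4, e6.le, e6.ge]

set_option maxHeartbeats 2000000 in
/-- bound on the effective sampling variance under importance sampling. -/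
theorem Ve_pIS_bound (d n : ℕ) (hd : 0 < d) (hn : 0 < n)
    (f : Fin n → Euc d → ℝ) (f' : Fin n → Euc d → Euc d) (L : Fin n → ℝ)
    (hgrad : ∀ i x, HasGradientAt (f i) (f' i x) x)
    (hconv : ∀ i x y, f i x + ⟪f' i x, y - x⟫ ≤ f i y)
    (hLpos : ∀ i, 0 < L i)
    (hsmooth : ∀ i x y, ‖f' i x - f' i y‖ ≤ L i * ‖x - y‖)
    (xstar : Euc d) (hmin : ∀ y, avgF n f xstar ≤ avgF n f y)
    (x w : Euc d) :
    Ve n f' (pIS n L) x w ≤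
      4 * Lbar n L * (avgF n f x - avgF n f xstar) +
      2 * Lbar n L * Dfun n f' L xstar w := by
  have hn' : (0:ℝ) < n := by exact_mod_cast hn
  have hne : Nonempty (Fin n) := Fin.pos_iff_nonempty.mp hn
  have hLbar : 0 < Lbar n L := by
    apply mul_pos (by positivity)
    exact Finset.sum_pos (fun i _ => hLpos i) Finset.univ_nonempty
  -- gradient of F at xstar is zero
  have hsumF : HasFDerivAt (fun y => ∑ i, f i y)
      (∑ i, (InnerProductSpace.toDual ℝ (Euc d)) (f' i xstar)) xstar :=
    HasFDerivAt.fun_sum (fun i _ => (hgrad i xstar).hasFDerivAt)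
  have hF : HasFDerivAt (avgF n f)
      ((1 / (n:ℝ)) • ∑ i, (InnerProductSpace.toDual ℝ (Euc d)) (f' i xstar)) xstar := by
    unfold avgF
    exact hsumF.const_mul (1 / (n:ℝ))
  have hloc : IsLocalMin (avgF n f) xstar := Filter.Eventually.of_forall hmin
  have hzero : ((1 / (n:ℝ)) • ∑ i, (InnerProductSpace.toDual ℝ (Euc d)) (f' i xstar)) = 0 :=
    hloc.hasFDerivAt_eq_zero hF
  have hsum0 : ∑ i, f' i xstar = 0 := by
    have h1 : (InnerProductSpace.toDual ℝ (Euc d)) ((1 / (n:ℝ)) • ∑ i, f' i xstar) = 0 := by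
      rw [_root_.map_smul, map_sum]; exact hzero
    have h2 : (1 / (n:ℝ)) • ∑ i, f' i xstar = 0 :=
      (InnerProductSpace.toDual ℝ (Euc d)).map_eq_zero_iff.mp h1
    rcases smul_eq_zero.mp h2 with h | h
    · exact absurd h (by positivity)
    · exact h
  have hinner0 : ∑ i, ⟪f' i xstar, x - xstar⟫ = 0 := by
    rw [← sum_inner, hsum0, inner_zero_left]
  -- per-index bound
  have hper : ∀ i, (1 / pIS n L i) * ‖f' i x - f' i w‖ ^ 2 ≤
      (n:ℝ) * Lbar n L *
        (4 * (f i x - f i xstar - ⟪f' i xstar, x - xstar⟫) +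
          2 * ((1 / L i) * ‖f' i w - f' i xstar‖ ^ 2)) := by
    intro i
    have hLi := hLpos i
    set p := f' i x - f' i xstar with hp
    set q := f' i w - f' i xstar with hq
    have hpq : f' i x - f' i w = p - q := by rw [hp, hq]; abel
    have hA : ‖f' i x - f' i w‖ ^ 2 ≤ 2 * ‖p‖ ^ 2 + 2 * ‖q‖ ^ 2 := by
      rw [hpq]
      nlinarith [norm_sub_le p q, sq_nonneg (‖p‖ - ‖q‖), norm_nonneg p, norm_nonneg q,
        norm_nonneg (p - q)]
    have hB : ‖p‖ ^ 2 ≤ 2 * L i * (f i x - f i xstar - ⟪f' i xstar, x - xstar⟫) :=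
      key_ineq (f i) (f' i) (L i) hLi (hgrad i) (hconv i) (hsmooth i) x xstar
    have hA' : ‖f' i x - f' i w‖ ^ 2 ≤
        4 * L i * (f i x - f i xstar - ⟪f' i xstar, x - xstar⟫) + 2 * ‖q‖ ^ 2 := by
      linarith
    have h5 := mul_le_mul_of_nonneg_left hA' (by positivity : (0:ℝ) ≤ 1 / L i)
    have e7 : (1 / L i) * (4 * L i * (f i x - f i xstar - ⟪f' i xstar, x - xstar⟫)
        + 2 * ‖q‖ ^ 2) =
        4 * (f i x - f i xstar - ⟪f' i xstar, x - xstar⟫) + 2 * ((1 / L i) * ‖q‖ ^ 2) := by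
      field_simp
    have h6 : (1 / L i) * ‖f' i x - f' i w‖ ^ 2 ≤
        4 * (f i x - f i xstar - ⟪f' i xstar, x - xstar⟫) + 2 * ((1 / L i) * ‖q‖ ^ 2) := by
      linarith [h5, e7.le, e7.ge]
    have h7 := mul_le_mul_of_nonneg_left h6 (by positivity : (0:ℝ) ≤ (n:ℝ) * Lbar n L)
    have e8 : 1 / pIS n L i = (n:ℝ) * Lbar n L * (1 / L i) := by
      rw [pIS, one_div_div]; ring
    calc (1 / pIS n L i) * ‖f' i x - f' i w‖ ^ 2
        = (n:ℝ) * Lbar n L * ((1 / L i) * ‖f' i x - f' i w‖ ^ 2) := by rw [e8]; ring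
      _ ≤ _ := h7
  -- sum up
  have hsumle : Ve n f' (pIS n L) x w ≤
      (1 / (n:ℝ) ^ 2) * ∑ i, (n:ℝ) * Lbar n L *
        (4 * (f i x - f i xstar - ⟪f' i xstar, x - xstar⟫) +
          2 * ((1 / L i) * ‖f' i w - f' i xstar‖ ^ 2)) := by
    rw [Ve]
    exact mul_le_mul_of_nonneg_left (Finset.sum_le_sum (fun i _ => hper i)) (by positivity)
  refine hsumle.trans (le_of_eq ?_)
  rw [← Finset.mul_sum, Finset.sum_add_distrib, ← Finset.mul_sum, ← Finset.mul_sum,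
    Finset.sum_sub_distrib, Finset.sum_sub_distrib, hinner0]
  rw [avgF, avgF, Lbar, Dfun]
  have h8 : (n:ℝ) ≠ 0 := ne_of_gt hn'
  field_simp
  ring
end

section
/- Suppose each f_i is convex and L_i-smooth, F is L_F-smooth and μ-strongly convex with μ > 0, and x* is the minimizer of F. Let ρ ∈ (0,1], 0 < η ≤ 1/(6L̄ + L_F), α₁ = max{1 − ημ, 1 − ρ/2}, and β = 4η²L̄/ρ. For any probability vector p with positive entries and x, w ∈ ℝ^d, with g_i = (1/(n p_i))(∇f_i(x) − ∇f_i(w)) + ∇F(w), the one-step AS-LSVRG contraction holds: ∑_{i=1}^n p_i ‖x − ηg_i − x*‖² + β(ρ·D(x) + (1 − ρ)·D(w)) ≤ α₁(‖x − x*‖² + β·D(w)) + η²(V_e(p; x, w) − V_e(p^IS; x, w)). -/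
open MeasureTheory Finset
open scoped RealInnerProductSpace BigOperators

/-- Descent lemma for a function with Lipschitz gradient. -/
lemma my_descent {d : ℕ} (h : Euc d → ℝ) (h' : Euc d → Euc d) (K : ℝ)
    (hg : ∀ z, HasGradientAt h (h' z) z)
    (hl : ∀ a b, ‖h' a - h' b‖ ≤ K * ‖a - b‖) (x y : Euc d) :
    h y ≤ h x + ⟪h' x, y - x⟫ + K / 2 * ‖y - x‖ ^ 2 := by
  set u := y - x with hu
  have hc : ∀ t : ℝ, HasDerivAt (fun t : ℝ => x + t • u) u t := by
    intro t
    simpa using ((hasDerivAt_id t).smul_const u).const_add x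
  have hgd : ∀ t : ℝ, HasDerivAt (fun t : ℝ => h (x + t • u)) ⟪h' (x + t • u), u⟫ t := by
    intro t
    have h2 := ((hg (x + t • u)).hasFDerivAt.comp_hasDerivAt t (hc t))
    simpa [InnerProductSpace.toDual_apply_apply, Function.comp_def] using h2
  set c : ℝ := ⟪h' x, u⟫ with hcdef
  set ψ : ℝ → ℝ := fun t => h (x + t • u) - t * c - (K * ‖u‖ ^ 2 / 2) * t ^ 2 with hψ
  have hψd : ∀ t : ℝ, HasDerivAt ψ (⟪h' (x + t • u), u⟫ - c - (K * ‖u‖ ^ 2) * t) t := by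
    intro t
    have h1 : HasDerivAt (fun t : ℝ => t * c) c t := by
      simpa using (hasDerivAt_id t).mul_const c
    have h2 : HasDerivAt (fun t : ℝ => (K * ‖u‖ ^ 2 / 2) * t ^ 2)
        ((K * ‖u‖ ^ 2 / 2) * (2 * t)) t := by
      simpa using (hasDerivAt_pow 2 t).const_mul (K * ‖u‖ ^ 2 / 2)
    have := ((hgd t).sub h1).sub h2
    convert this using 1
    exacts [rfl, rfl, rfl, by ring]
  have hmono : AntitoneOn ψ (Set.Icc (0:ℝ) 1) := by
    apply antitoneOn_of_deriv_nonpos (convex_Icc 0 1)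
    · exact fun t _ => ((hψd t).continuousAt).continuousWithinAt
    · exact fun t _ => ((hψd t).differentiableAt).differentiableWithinAt
    · intro t ht
      rw [interior_Icc] at ht
      rw [(hψd t).deriv]
      have hb : ⟪h' (x + t • u) - h' x, u⟫ ≤ K * t * ‖u‖ ^ 2 := by
        calc ⟪h' (x + t • u) - h' x, u⟫ ≤ ‖h' (x + t • u) - h' x‖ * ‖u‖ :=
              real_inner_le_norm _ _
          _ ≤ (K * ‖x + t • u - x‖) * ‖u‖ := by
              have := hl (x + t • u) x
              exact mul_le_mul_of_nonneg_right this (norm_nonneg _)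
          _ = K * t * ‖u‖ ^ 2 := by
              rw [add_sub_cancel_left, norm_smul, Real.norm_eq_abs,
                abs_of_nonneg ht.1.le]
              ring
      rw [inner_sub_left] at hb
      nlinarith [hb]
  have h01 := hmono (Set.mem_Icc.2 ⟨le_refl 0, zero_le_one⟩)
    (Set.mem_Icc.2 ⟨zero_le_one, le_refl 1⟩) zero_le_one
  simp only [hψ, one_smul, zero_smul, add_zero, one_pow, zero_pow, mul_zero, mul_one,
    sub_zero, mul_zero, zero_mul] at h01
  have hxy : x + u = y := by rw [hu]; abel
  rw [hxy] at h01
  linarith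

/-- Co-coercivity of a convex smooth function. -/
lemma my_cocoercive {d : ℕ} (h : Euc d → ℝ) (h' : Euc d → Euc d) (K : ℝ) (hK : 0 < K)
    (hg : ∀ z, HasGradientAt h (h' z) z)
    (hconv : ∀ a b, h a + ⟪h' a, b - a⟫ ≤ h b)
    (hl : ∀ a b, ‖h' a - h' b‖ ≤ K * ‖a - b‖) (x y : Euc d) :
    ‖h' y - h' x‖ ^ 2 ≤ 2 * K * (h y - h x - ⟪h' x, y - x⟫) := by
  set v := h' y - h' x with hv
  set z := y - K⁻¹ • v with hz
  have h1 := hconv x z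
  have h2 := my_descent h h' K hg hl y z
  have e1 : z - x = (y - x) - K⁻¹ • v := by rw [hz]; abel
  have e2 : z - y = -(K⁻¹ • v) := by rw [hz]; abel
  have e3 : ⟪h' x, z - x⟫ = ⟪h' x, y - x⟫ - K⁻¹ * ⟪h' x, v⟫ := by
    rw [e1, inner_sub_right, real_inner_smul_right]
  have e4 : ⟪h' y, z - y⟫ = -(K⁻¹ * ⟪h' y, v⟫) := by
    rw [e2, inner_neg_right, real_inner_smul_right]
  have e5 : ‖z - y‖ ^ 2 = K⁻¹ ^ 2 * ‖v‖ ^ 2 := by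
    rw [e2, norm_neg, norm_smul, Real.norm_eq_abs, mul_pow, sq_abs]
  have e6 : ⟪h' y, v⟫ - ⟪h' x, v⟫ = ‖v‖ ^ 2 := by
    rw [← inner_sub_left, ← hv, real_inner_self_eq_norm_sq]
  rw [e3] at h1
  rw [e4, e5] at h2
  have hK' : K ≠ 0 := hK.ne'
  have key : h x + ⟪h' x, y - x⟫ + ‖v‖ ^ 2 / (2 * K) ≤ h y := by
    have e7 : K / 2 * (K⁻¹ ^ 2 * ‖v‖ ^ 2) = ‖v‖ ^ 2 / (2 * K) := by
      field_simp
    rw [e7] at h2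
    have e8 : K⁻¹ * ⟪h' y, v⟫ - K⁻¹ * ⟪h' x, v⟫ = ‖v‖ ^ 2 / K := by
      rw [← mul_sub, e6]; field_simp
    have e9 : ‖v‖ ^ 2 / (2 * K) = ‖v‖ ^ 2 / K / 2 := by ring
    linarith [h1, h2, e8, e9]
  have hstep : ‖v‖ ^ 2 / (2 * K) ≤ h y - h x - ⟪h' x, y - x⟫ := by linarith
  calc ‖v‖ ^ 2 = 2 * K * (‖v‖ ^ 2 / (2 * K)) := by field_simp
    _ ≤ 2 * K * (h y - h x - ⟪h' x, y - x⟫) :=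
        mul_le_mul_of_nonneg_left hstep (by linarith)

lemma avgF_hasGradient {d n : ℕ} (f : Fin n → Euc d → ℝ) (f' : Fin n → Euc d → Euc d)
    (hgrad : ∀ i x, HasGradientAt (f i) (f' i x) x) (x : Euc d) :
    HasGradientAt (avgF n f) (avgG n f' x) x := by
  rw [hasGradientAt_iff_hasFDerivAt]
  have h1 : HasFDerivAt (fun y => ∑ i, f i y)
      (∑ i, (InnerProductSpace.toDual ℝ (Euc d)) (f' i x)) x :=
    HasFDerivAt.fun_sum fun i _ => (hgrad i x).hasFDerivAt
  have h2 := h1.const_smul (1 / (n : ℝ))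
  have e : (InnerProductSpace.toDual ℝ (Euc d)) (avgG n f' x)
      = (1 / (n : ℝ)) • ∑ i, (InnerProductSpace.toDual ℝ (Euc d)) (f' i x) := by
    rw [avgG, _root_.map_smul, map_sum]
  rw [e]
  exact h2

lemma avgG_min_eq_zero {d n : ℕ} (f : Fin n → Euc d → ℝ) (f' : Fin n → Euc d → Euc d)
    (hgrad : ∀ i x, HasGradientAt (f i) (f' i x) x) (xstar : Euc d)
    (hmin : ∀ y, avgF n f xstar ≤ avgF n f y) : avgG n f' xstar = 0 := by
  have hloc : IsLocalMin (avgF n f) xstar := Filter.Eventually.of_forall hmin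
  have h0 := hloc.hasFDerivAt_eq_zero
    ((avgF_hasGradient f f' hgrad xstar).hasFDerivAt)
  apply (InnerProductSpace.toDual ℝ (Euc d)).injective
  rw [h0, map_zero]

set_option maxHeartbeats 1000000 in
/-- one-step AS-LSVRG contraction under strong convexity. -/
theorem as_lsvrg_one_step_contraction (d n : ℕ) (hd : 0 < d) (hn : 0 < n)
    (f : Fin n → Euc d → ℝ) (f' : Fin n → Euc d → Euc d) (L : Fin n → ℝ) (LF μ : ℝ)
    (hgrad : ∀ i x, HasGradientAt (f i) (f' i x) x)
    (hconv : ∀ i x y, f i x + ⟪f' i x, y - x⟫ ≤ f i y)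
    (hLpos : ∀ i, 0 < L i)
    (hsmooth : ∀ i x y, ‖f' i x - f' i y‖ ≤ L i * ‖x - y‖)
    (hLF : ∀ x y, ‖avgG n f' x - avgG n f' y‖ ≤ LF * ‖x - y‖)
    (hμ : 0 < μ)
    (hsc : ∀ x y : Euc d,
      avgF n f x + ⟪avgG n f' x, y - x⟫ + (μ / 2) * ‖y - x‖ ^ 2 ≤ avgF n f y)
    (xstar : Euc d) (hmin : ∀ y, avgF n f xstar ≤ avgF n f y)
    (ρ η α₁ β : ℝ) (hρ0 : 0 < ρ) (hρ1 : ρ ≤ 1)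
    (hη0 : 0 < η) (hη : η ≤ 1 / (6 * Lbar n L + LF))
    (hα₁ : α₁ = max (1 - η * μ) (1 - ρ / 2))
    (hβ : β = 4 * η ^ 2 * Lbar n L / ρ)
    (p : Fin n → ℝ) (hp : ∀ i, 0 < p i) (hp1 : ∑ i, p i = 1)
    (x w : Euc d)
    (g : Fin n → Euc d)
    (hg : ∀ i, g i = (1 / ((n : ℝ) * p i)) • (f' i x - f' i w) + avgG n f' w) :
    ∑ i, p i * ‖x - η • g i - xstar‖ ^ 2 +
      β * (ρ * Dfun n f' L xstar x + (1 - ρ) * Dfun n f' L xstar w) ≤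
      α₁ * (‖x - xstar‖ ^ 2 + β * Dfun n f' L xstar w) +
      η ^ 2 * (Ve n f' p x w - Ve n f' (pIS n L) x w) := by
  have hN : (0:ℝ) < (n:ℝ) := by exact_mod_cast hn
  haveI : Nonempty (Fin n) := ⟨⟨0, hn⟩⟩
  have hN0 : (n:ℝ) ≠ 0 := hN.ne'
  have hlam : 0 < Lbar n L := by
    rw [Lbar]
    apply mul_pos (by positivity)
    exact Finset.sum_pos (fun i _ => hLpos i) (univ_nonempty)
  set lam := Lbar n L with hlamdef
  -- gradient of F vanishes at xstar, convexity of F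
  have hGstar : avgG n f' xstar = 0 := avgG_min_eq_zero f f' hgrad xstar hmin
  have hconvF : ∀ a b, avgF n f a + ⟪avgG n f' a, b - a⟫ ≤ avgF n f b := by
    intro a b
    have h1 := hsc a b
    nlinarith [sq_nonneg ‖b - a‖, hμ.le]
  -- LF > 0
  have hLFpos : 0 < LF := by
    set e : Euc d := EuclideanSpace.single ⟨0, hd⟩ (1:ℝ) with he
    have hne : ‖e‖ = 1 := by rw [he, EuclideanSpace.norm_single, norm_one]
    have h1 := hsc 0 e
    have h2 := hsc e 0
    have h3 := hLF e 0
    have h4 := real_inner_le_norm (avgG n f' e - avgG n f' 0) e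
    rw [inner_sub_left] at h4
    have h5 : ⟪avgG n f' e, (0:Euc d) - e⟫ = -⟪avgG n f' e, e⟫ := by
      rw [zero_sub, inner_neg_right]
    have h6 : ⟪avgG n f' 0, e - 0⟫ = ⟪avgG n f' 0, e⟫ := by rw [sub_zero]
    rw [h5] at h2
    rw [h6] at h1
    have h7 : ‖e - (0:Euc d)‖ = 1 := by rw [sub_zero, hne]
    have h8 : ‖(0:Euc d) - e‖ = 1 := by rw [zero_sub, norm_neg, hne]
    rw [h7] at h3
    rw [h8] at h2
    rw [hne] at h4
    rw [h7] at h1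
    nlinarith [h1, h2, h3, h4, hμ]
  have hηsum : η * (6 * lam + LF) ≤ 1 := by
    have hpos : 0 < 6 * lam + LF := by linarith
    rw [le_div_iff₀ hpos] at hη
    exact hη
  -- sum of gradients at xstar is zero
  have hsum_fstar : ∑ i, f' i xstar = 0 := by
    have := hGstar
    rw [avgG, smul_eq_zero] at this
    rcases this with h | h
    · exact absurd h (by positivity)
    · exact h
  set q : Euc d := x - xstar with hq
  set Gx := avgG n f' x with hGx
  set Gw := avgG n f' w with hGw
  set Dx := Dfun n f' L xstar x with hDxdef
  set Dw := Dfun n f' L xstar w with hDwdef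
  set T := avgF n f x - avgF n f xstar with hTdef
  have hT : 0 ≤ T := by rw [hTdef]; linarith [hmin x]
  have hDx0 : 0 ≤ Dx := by
    rw [hDxdef, Dfun]
    apply mul_nonneg (by positivity)
    apply Finset.sum_nonneg
    intro i _
    exact mul_nonneg (one_div_nonneg.2 (hLpos i).le) (sq_nonneg _)
  have hDw0 : 0 ≤ Dw := by
    rw [hDwdef, Dfun]
    apply mul_nonneg (by positivity)
    apply Finset.sum_nonneg
    intro i _
    exact mul_nonneg (one_div_nonneg.2 (hLpos i).le) (sq_nonneg _)
  -- strong convexity consequence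
  have hsc' : 2 * T + μ * ‖q‖ ^ 2 ≤ 2 * ⟪Gx, q⟫ := by
    have h1 := hsc x xstar
    have h2 : xstar - x = -q := by rw [hq]; abel
    have h3 : ‖xstar - x‖ = ‖q‖ := by rw [h2, norm_neg]
    rw [h2, inner_neg_right, norm_neg] at h1
    rw [hTdef]
    linarith
  -- cocoercivity of F
  have hGx2 : ‖Gx‖ ^ 2 ≤ 2 * LF * T := by
    have h1 := my_cocoercive (avgF n f) (avgG n f') LF hLFpos
      (avgF_hasGradient f f' hgrad) hconvF hLF xstar x
    rw [hGstar, sub_zero, inner_zero_left, sub_zero] at h1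
    rw [hTdef]
    exact h1
  -- D(x) ≤ 2T
  have hDxT : Dx ≤ 2 * T := by
    have hs1 : ∑ i, (1 / L i) * ‖f' i x - f' i xstar‖ ^ 2 ≤
        ∑ i, 2 * (f i x - f i xstar - ⟪f' i xstar, q⟫) := by
      apply Finset.sum_le_sum
      intro i _
      have hco := my_cocoercive (f i) (f' i) (L i) (hLpos i) (hgrad i) (hconv i)
        (hsmooth i) xstar x
      have hLi := (hLpos i).ne'
      have h2 := mul_le_mul_of_nonneg_left hco (one_div_pos.2 (hLpos i)).le
      calc (1 / L i) * ‖f' i x - f' i xstar‖ ^ 2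
          ≤ (1 / L i) * (2 * L i * (f i x - f i xstar - ⟪f' i xstar, x - xstar⟫)) := h2
        _ = 2 * (f i x - f i xstar - ⟪f' i xstar, q⟫) := by
            rw [hq]; field_simp
    have hs2 : ∑ i, 2 * (f i x - f i xstar - ⟪f' i xstar, q⟫) =
        2 * (∑ i, f i x) - 2 * (∑ i, f i xstar) := by
      have hz : ∑ i, ⟪f' i xstar, q⟫ = 0 := by
        rw [← sum_inner, hsum_fstar, inner_zero_left]
      rw [← Finset.mul_sum, Finset.sum_sub_distrib, Finset.sum_sub_distrib, hz]
      ring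
    rw [hs2] at hs1
    have h3 := mul_le_mul_of_nonneg_left hs1 (le_of_lt (by positivity : (0:ℝ) < 1 / (n:ℝ)))
    rw [hDxdef, Dfun, hTdef, avgF, avgF]
    calc (1 / (n:ℝ)) * ∑ i, (1 / L i) * ‖f' i x - f' i xstar‖ ^ 2
        ≤ (1 / (n:ℝ)) * (2 * (∑ i, f i x) - 2 * (∑ i, f i xstar)) := h3
      _ = 2 * ((1 / (n:ℝ)) * ∑ i, f i x - (1 / (n:ℝ)) * ∑ i, f i xstar) := by ring
  -- V_e(pIS) ≤ 2 λ (Dx + Dw)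
  have hVeIS : Ve n f' (pIS n L) x w = (lam / (n:ℝ)) * ∑ i, (1 / L i) * ‖f' i x - f' i w‖ ^ 2 := by
    rw [Ve, Finset.mul_sum, Finset.mul_sum]
    apply Finset.sum_congr rfl
    intro i _
    rw [pIS, ← hlamdef]
    have hLi := (hLpos i).ne'
    have hl0 := hlam.ne'
    field_simp
  have hVs : Ve n f' (pIS n L) x w ≤ 2 * lam * (Dx + Dw) := by
    rw [hVeIS, hDxdef, hDwdef, Dfun, Dfun]
    have hs1 : ∑ i, (1 / L i) * ‖f' i x - f' i w‖ ^ 2 ≤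
        ∑ i, ((1 / L i) * (2 * ‖f' i x - f' i xstar‖ ^ 2 + 2 * ‖f' i w - f' i xstar‖ ^ 2)) := by
      apply Finset.sum_le_sum
      intro i _
      apply mul_le_mul_of_nonneg_left _ (one_div_pos.2 (hLpos i)).le
      have he : f' i x - f' i w = (f' i x - f' i xstar) - (f' i w - f' i xstar) := by abel
      rw [he]
      nlinarith [norm_sub_le (f' i x - f' i xstar) (f' i w - f' i xstar),
        norm_nonneg (f' i x - f' i xstar), norm_nonneg (f' i w - f' i xstar),
        sq_nonneg (‖f' i x - f' i xstar‖ - ‖f' i w - f' i xstar‖),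
        norm_nonneg ((f' i x - f' i xstar) - (f' i w - f' i xstar))]
    have h3 := mul_le_mul_of_nonneg_left hs1 (le_of_lt (by positivity : (0:ℝ) < lam / (n:ℝ)))
    calc (lam / (n:ℝ)) * ∑ i, (1 / L i) * ‖f' i x - f' i w‖ ^ 2
        ≤ (lam / (n:ℝ)) * ∑ i, ((1 / L i) * (2 * ‖f' i x - f' i xstar‖ ^ 2
            + 2 * ‖f' i w - f' i xstar‖ ^ 2)) := h3
      _ = 2 * lam * ((1 / (n:ℝ)) * ∑ i, (1 / L i) * ‖f' i x - f' i xstar‖ ^ 2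
            + (1 / (n:ℝ)) * ∑ i, (1 / L i) * ‖f' i w - f' i xstar‖ ^ 2) := by
          rw [Finset.mul_sum, Finset.mul_sum, Finset.mul_sum, ← Finset.sum_add_distrib,
            Finset.mul_sum]
          apply Finset.sum_congr rfl
          intro i _
          ring
  -- Δ identity
  have hΔ : Gx - Gw = (1 / (n:ℝ)) • ∑ i, (f' i x - f' i w) := by
    rw [hGx, hGw, avgG, avgG, ← smul_sub, Finset.sum_sub_distrib]
  -- Step A : ∑ pᵢ ⟪gᵢ, q⟫ = ⟪Gx, q⟫
  have hA : ∑ i, p i * ⟪g i, q⟫ = ⟪Gx, q⟫ := by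
    have hper : ∀ i, p i * ⟪g i, q⟫ = (1/(n:ℝ)) * ⟪f' i x - f' i w, q⟫ + p i * ⟪Gw, q⟫ := by
      intro i
      rw [hg i, inner_add_left, real_inner_smul_left]
      have hpi := (hp i).ne'
      field_simp
    rw [Finset.sum_congr rfl (fun i _ => hper i), Finset.sum_add_distrib,
      ← Finset.mul_sum, ← Finset.sum_mul, hp1, one_mul, ← sum_inner]
    have h2 : (1/(n:ℝ)) * ⟪∑ i, (f' i x - f' i w), q⟫ = ⟪Gx - Gw, q⟫ := by
      rw [hΔ, real_inner_smul_left]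
    rw [h2, inner_sub_left]
    ring
  -- Step B : second moment
  set S := ∑ i, p i * ‖g i‖ ^ 2 with hSdef
  have hB : S = Ve n f' p x w + ‖Gx‖ ^ 2 - ‖Gx - Gw‖ ^ 2 := by
    have hper : ∀ i, p i * ‖g i‖ ^ 2 =
        (1/(n:ℝ)^2) * ((1 / p i) * ‖f' i x - f' i w‖ ^ 2)
        + (2/(n:ℝ)) * ⟪f' i x - f' i w, Gw⟫ + p i * ‖Gw‖ ^ 2 := by
      intro i
      rw [hg i, norm_add_sq_real, real_inner_smul_left, norm_smul,
        Real.norm_eq_abs, mul_pow, sq_abs]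
      have hpi := (hp i).ne'
      field_simp
    have hB1 : S = (1/(n:ℝ)^2) * ∑ i, (1 / p i) * ‖f' i x - f' i w‖ ^ 2
        + (2/(n:ℝ)) * ∑ i, ⟪f' i x - f' i w, Gw⟫ + ‖Gw‖ ^ 2 := by
      rw [hSdef, Finset.sum_congr rfl (fun i _ => hper i), Finset.sum_add_distrib,
        Finset.sum_add_distrib, ← Finset.mul_sum, ← Finset.mul_sum, ← Finset.sum_mul,
        hp1, one_mul]
    have h2 : (2/(n:ℝ)) * ∑ i, ⟪f' i x - f' i w, Gw⟫ = 2 * ⟪Gx - Gw, Gw⟫ := by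
      rw [← sum_inner]
      have : ⟪Gx - Gw, Gw⟫ = (1/(n:ℝ)) * ⟪∑ i, (f' i x - f' i w), Gw⟫ := by
        rw [hΔ, real_inner_smul_left]
      rw [this]
      ring
    have h3 : ‖Gx‖ ^ 2 = ‖Gx - Gw‖ ^ 2 + 2 * ⟪Gx - Gw, Gw⟫ + ‖Gw‖ ^ 2 := by
      have : Gx = (Gx - Gw) + Gw := by abel
      nth_rewrite 1 [this]
      rw [norm_add_sq_real]
    rw [hB1, h2, Ve]
    linarith [h3]
  -- Step C : expansion of the step
  have hC : ∑ i, p i * ‖x - η • g i - xstar‖ ^ 2 =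
      ‖q‖ ^ 2 - 2 * η * ⟪Gx, q⟫ + η ^ 2 * S := by
    have hper : ∀ i, p i * ‖x - η • g i - xstar‖ ^ 2 =
        p i * ‖q‖ ^ 2 - 2 * η * (p i * ⟪g i, q⟫) + η ^ 2 * (p i * ‖g i‖ ^ 2) := by
      intro i
      have he : x - η • g i - xstar = q - η • g i := by rw [hq]; abel
      rw [he, norm_sub_sq_real, real_inner_smul_right, norm_smul, Real.norm_eq_abs,
        mul_pow, sq_abs, real_inner_comm]
      ring
    rw [Finset.sum_congr rfl (fun i _ => hper i), Finset.sum_add_distrib,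
      Finset.sum_sub_distrib, ← Finset.sum_mul, hp1, one_mul, ← Finset.mul_sum,
      ← Finset.mul_sum, hA, hSdef]
  -- Final assembly
  rw [hC, hB]
  have hβ0 : 0 ≤ β := by rw [hβ]; positivity
  have hβρ : β * ρ = 4 * η ^ 2 * lam := by
    rw [hβ]; field_simp
  have hβρDx : β * ρ * Dx = 4 * η ^ 2 * lam * Dx := by rw [hβρ]
  have hβρDw : β * ρ * Dw = 4 * η ^ 2 * lam * Dw := by rw [hβρ]
  have hα1a : 1 - η * μ ≤ α₁ := by rw [hα₁]; exact le_max_left _ _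
  have hα1b : 1 - ρ / 2 ≤ α₁ := by rw [hα₁]; exact le_max_right _ _
  have F1 : η * (2 * T + μ * ‖q‖ ^ 2) ≤ η * (2 * ⟪Gx, q⟫) :=
    mul_le_mul_of_nonneg_left hsc' hη0.le
  have F2 : η ^ 2 * ‖Gx‖ ^ 2 ≤ η ^ 2 * (2 * LF * T) :=
    mul_le_mul_of_nonneg_left hGx2 (sq_nonneg η)
  have F3 : 0 ≤ η ^ 2 * ‖Gx - Gw‖ ^ 2 := by positivity
  have F4 : η ^ 2 * Ve n f' (pIS n L) x w ≤ η ^ 2 * (2 * lam * (Dx + Dw)) :=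
    mul_le_mul_of_nonneg_left hVs (sq_nonneg η)
  have F5 : η ^ 2 * lam * Dx ≤ η ^ 2 * lam * (2 * T) :=
    mul_le_mul_of_nonneg_left hDxT (by positivity)
  have F6 : 0 ≤ η * T * (1 - η * (6 * lam + LF)) :=
    mul_nonneg (mul_nonneg hη0.le hT) (by linarith)
  have F7 : 0 ≤ (α₁ - (1 - η * μ)) * ‖q‖ ^ 2 :=
    mul_nonneg (by linarith) (sq_nonneg _)
  have F8 : 0 ≤ (α₁ - (1 - ρ / 2)) * (β * Dw) :=
    mul_nonneg (by linarith) (mul_nonneg hβ0 hDw0)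
  linarith [F1, F2, F3, F4, F5, F6, F7, F8, hβρDx, hβρDw]
end

section
/- Suppose each f_i is convex and L_i-smooth and F is μ-strongly convex with μ > 0 and minimizer x*. Let θ₁, θ₂ > 0 with θ₁ + θ₂ ≤ 1, κ = μ/L̄, and η = θ₂/((1 + θ₂)θ₁). Let z, w, v ∈ ℝ^d, x = θ₁z + θ₂w + (1 − θ₁ − θ₂)v, and for a probability vector p with positive entries set g_i = (1/(n p_i))(∇f_i(x) − ∇f_i(w)) + ∇F(w), z'_i = (1/(1 + ηκ))(ηκ·x + z − (η/L̄)g_i), v'_i = x + θ₁(z'_i − z). With Z(u) = (L̄(1 + ηκ)/(2η))‖u − x*‖² and V(u) = (1/θ₁)(F(u) − F(x*)), it holds that ∑_{i=1}^n p_i (Z(z'_i) + V(v'_i)) ≤ (1 − θ₁ − θ₂)·V(v) + (1/(1 + ηκ))·Z(z) + (θ₂/θ₁)(F(w) − F(x*)) + (θ₂/(2L̄θ₁))(V_e(p; x, w) − V_e(p^IS; x, w)). -/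
open MeasureTheory Finset
open scoped RealInnerProductSpace BigOperators

lemma inner_grad_hasDerivAt {d : ℕ} (φ : Euc d → ℝ) (φ' : Euc d → Euc d)
    (hgrad : ∀ u, HasGradientAt φ (φ' u) u) (x dv : Euc d) (t : ℝ) :
    HasDerivAt (fun s : ℝ => φ (x + s • dv)) ⟪φ' (x + t • dv), dv⟫ t := by
  have hc : HasDerivAt (fun s : ℝ => x + s • dv) dv t := by
    simpa using ((hasDerivAt_id t).smul_const dv).const_add x
  have h := (hgrad (x + t • dv)).hasFDerivAt.comp_hasDerivAt t hc
  simp only [InnerProductSpace.toDual_apply_apply] at h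
  exact h

/-- Descent lemma for Lipschitz-gradient functions. -/
lemma descent_lemma {d : ℕ} (φ : Euc d → ℝ) (φ' : Euc d → Euc d) (C : ℝ) (hC : 0 ≤ C)
    (hgrad : ∀ u, HasGradientAt φ (φ' u) u)
    (hlip : ∀ u v, ‖φ' u - φ' v‖ ≤ C * ‖u - v‖) (x y : Euc d) :
    φ y ≤ φ x + ⟪φ' x, y - x⟫ + C / 2 * ‖y - x‖ ^ 2 := by
  set dv : Euc d := y - x with hdv
  set ψ : ℝ → ℝ := fun t => φ (x + t • dv) - t * ⟪φ' x, dv⟫ - C / 2 * t ^ 2 * ‖dv‖ ^ 2 with hψdef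
  have hψ : ∀ t : ℝ, HasDerivAt ψ
      (⟪φ' (x + t • dv), dv⟫ - ⟪φ' x, dv⟫ - C * t * ‖dv‖ ^ 2) t := by
    intro t
    have h1 := inner_grad_hasDerivAt φ φ' hgrad x dv t
    have h2 : HasDerivAt (fun s : ℝ => s * ⟪φ' x, dv⟫) ⟪φ' x, dv⟫ t := by
      simpa using (hasDerivAt_id t).mul_const ⟪φ' x, dv⟫
    have h3 : HasDerivAt (fun s : ℝ => C / 2 * s ^ 2 * ‖dv‖ ^ 2) (C * t * ‖dv‖ ^ 2) t := by
      have := ((hasDerivAt_pow 2 t).const_mul (C / 2)).mul_const (‖dv‖ ^ 2)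
      refine this.congr_deriv ?_
      norm_num
      exact Or.inl (by ring)
    exact (h1.sub h2).sub h3
  have hmono : AntitoneOn ψ (Set.Icc 0 1) := by
    apply antitoneOn_of_deriv_nonpos (convex_Icc 0 1)
    · exact fun t _ => ((hψ t).continuousAt).continuousWithinAt
    · exact fun t _ => ((hψ t).differentiableAt).differentiableWithinAt
    · intro t ht
      rw [(hψ t).deriv]
      rw [interior_Icc] at ht
      have ht0 : (0 : ℝ) ≤ t := le_of_lt ht.1
      have hcs : ⟪φ' (x + t • dv) - φ' x, dv⟫ ≤ ‖φ' (x + t • dv) - φ' x‖ * ‖dv‖ :=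
        real_inner_le_norm _ _
      have hl : ‖φ' (x + t • dv) - φ' x‖ ≤ C * (t * ‖dv‖) := by
        have := hlip (x + t • dv) x
        simpa [norm_smul, abs_of_nonneg ht0] using this
      have : ⟪φ' (x + t • dv), dv⟫ - ⟪φ' x, dv⟫ ≤ C * t * ‖dv‖ ^ 2 := by
        have h4 : ⟪φ' (x + t • dv) - φ' x, dv⟫ = ⟪φ' (x + t • dv), dv⟫ - ⟪φ' x, dv⟫ :=
          inner_sub_left _ _ _
        nlinarith [norm_nonneg dv, norm_nonneg (φ' (x + t • dv) - φ' x)]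
      linarith
  have h01 := hmono (Set.left_mem_Icc.2 zero_le_one) (Set.right_mem_Icc.2 zero_le_one) zero_le_one
  have hψ0 : ψ 0 = φ x := by simp [hψdef]
  have hψ1 : ψ 1 = φ y - ⟪φ' x, dv⟫ - C / 2 * ‖dv‖ ^ 2 := by
    simp only [hψdef, one_smul, one_pow, one_mul, hdv]
    rw [show x + (y - x) = y by abel]
    ring
  rw [hψ0, hψ1] at h01
  linarith

lemma polar_identity {d : ℕ} (u a b : Euc d) :
    ⟪u - a, a - b⟫ = (‖u - b‖ ^ 2 - ‖u - a‖ ^ 2 - ‖a - b‖ ^ 2) / 2 := by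
  rw [show u - b = (u - a) + (a - b) by abel, norm_add_sq_real]
  ring

lemma young_ineq {d : ℕ} (u v : Euc d) (β : ℝ) (hβ : 0 < β) :
    ⟪u, v⟫ ≤ 1 / (2 * β) * ‖u‖ ^ 2 + β / 2 * ‖v‖ ^ 2 := by
  have h0 : (0 : ℝ) ≤ ‖u - β • v‖ ^ 2 := sq_nonneg _
  have hexp : ‖u - β • v‖ ^ 2 = ‖u‖ ^ 2 - 2 * (β * ⟪u, v⟫) + β ^ 2 * ‖v‖ ^ 2 := by
    rw [norm_sub_sq_real, real_inner_smul_right, norm_smul]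
    simp [abs_of_pos hβ]
    ring
  rw [hexp] at h0
  have h2β : (0 : ℝ) < 2 * β := by linarith
  calc ⟪u, v⟫ ≤ (‖u‖ ^ 2 + β ^ 2 * ‖v‖ ^ 2) / (2 * β) := by
        rw [le_div_iff₀ h2β]; nlinarith
    _ = 1 / (2 * β) * ‖u‖ ^ 2 + β / 2 * ‖v‖ ^ 2 := by field_simp

lemma cocoercivity {d : ℕ} (φ : Euc d → ℝ) (φ' : Euc d → Euc d) (C : ℝ) (hC : 0 < C)
    (hgrad : ∀ u, HasGradientAt φ (φ' u) u)
    (hconv : ∀ x y, φ x + ⟪φ' x, y - x⟫ ≤ φ y)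
    (hlip : ∀ u v, ‖φ' u - φ' v‖ ≤ C * ‖u - v‖) (x w : Euc d) :
    1 / (2 * C) * ‖φ' w - φ' x‖ ^ 2 ≤ φ w - φ x - ⟪φ' x, w - x⟫ := by
  set h : Euc d → ℝ := fun u => φ u - ⟪φ' x, u⟫ with hh
  set h' : Euc d → Euc d := fun u => φ' u - φ' x with hh'
  have hgrad' : ∀ u, HasGradientAt h (h' u) u := by
    intro u
    rw [hasGradientAt_iff_hasFDerivAt]
    have hlin := (InnerProductSpace.toDual ℝ (Euc d) (φ' x)).hasFDerivAt (x := u)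
    have hcomb := (hgrad u).hasFDerivAt.sub hlin
    have hmap : InnerProductSpace.toDual ℝ (Euc d) (h' u)
        = InnerProductSpace.toDual ℝ (Euc d) (φ' u) - InnerProductSpace.toDual ℝ (Euc d) (φ' x) :=
      by rw [hh']; exact map_sub _ _ _
    rw [hmap]
    have hfun : h = fun y => φ y - (InnerProductSpace.toDual ℝ (Euc d) (φ' x)) y := by
      funext y; simp [hh, InnerProductSpace.toDual_apply_apply]
    rw [hfun]
    exact hcomb
  have hlip' : ∀ u v, ‖h' u - h' v‖ ≤ C * ‖u - v‖ := by
    intro u v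
    simpa [hh', sub_sub_sub_cancel_right] using hlip u v
  -- h is minimized at x
  have hminx : ∀ u, h x ≤ h u := by
    intro u
    have := hconv x u
    simp only [hh, inner_sub_right] at *
    linarith
  -- descent step from w
  set u : Euc d := w - (1 / C) • h' w with hu
  have hd := descent_lemma h h' C (le_of_lt hC) hgrad' hlip' w u
  have huw : u - w = -((1 / C) • h' w) := by rw [hu]; abel
  have hinner : ⟪h' w, u - w⟫ = -(1 / C * ‖h' w‖ ^ 2) := by
    rw [huw, inner_neg_right, real_inner_smul_right, real_inner_self_eq_norm_sq]
  have hnorm : ‖u - w‖ ^ 2 = (1 / C) ^ 2 * ‖h' w‖ ^ 2 := by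
    rw [huw, norm_neg, norm_smul]
    simp [abs_of_pos hC]
    ring
  rw [hinner, hnorm] at hd
  have hkey : h u ≤ h w - 1 / (2 * C) * ‖h' w‖ ^ 2 := by
    have hC' : C ≠ 0 := ne_of_gt hC
    have : C / 2 * ((1 / C) ^ 2 * ‖h' w‖ ^ 2) - 1 / C * ‖h' w‖ ^ 2
        = -(1 / (2 * C) * ‖h' w‖ ^ 2) := by field_simp; ring
    linarith
  have hxu := hminx u
  clear_value u h' h
  have hfin : 1 / (2 * C) * ‖h' w‖ ^ 2 ≤ h w - h x := by linarith
  simp only [hh, hh'] at hfin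
  have hwx : ⟪φ' x, w - x⟫ = ⟪φ' x, w⟫ - ⟪φ' x, x⟫ := inner_sub_right _ _ _
  rw [hwx]
  linarith

set_option maxHeartbeats 2000000 in
/-- one-step AS-LKatyusha inequality for the `Z + V` potential. -/
theorem as_lkatyusha_ZV_step (d n : ℕ) (hd : 0 < d) (hn : 0 < n)
    (f : Fin n → Euc d → ℝ) (f' : Fin n → Euc d → Euc d) (L : Fin n → ℝ) (μ : ℝ)
    (hgrad : ∀ i x, HasGradientAt (f i) (f' i x) x)
    (hconv : ∀ i x y, f i x + ⟪f' i x, y - x⟫ ≤ f i y)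
    (hLpos : ∀ i, 0 < L i)
    (hsmooth : ∀ i x y, ‖f' i x - f' i y‖ ≤ L i * ‖x - y‖)
    (hμ : 0 < μ)
    (hsc : ∀ x y : Euc d,
      avgF n f x + ⟪avgG n f' x, y - x⟫ + (μ / 2) * ‖y - x‖ ^ 2 ≤ avgF n f y)
    (xstar : Euc d) (hmin : ∀ y, avgF n f xstar ≤ avgF n f y)
    (θ₁ θ₂ κ η : ℝ) (hθ₁ : 0 < θ₁) (hθ₂ : 0 < θ₂) (hθsum : θ₁ + θ₂ ≤ 1)
    (hκ : κ = μ / Lbar n L) (hη : η = θ₂ / ((1 + θ₂) * θ₁))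
    (z w v : Euc d) (x : Euc d)
    (hx : x = θ₁ • z + θ₂ • w + (1 - θ₁ - θ₂) • v)
    (p : Fin n → ℝ) (hp : ∀ i, 0 < p i) (hp1 : ∑ i, p i = 1)
    (g z' v' : Fin n → Euc d)
    (hg : ∀ i, g i = (1 / ((n : ℝ) * p i)) • (f' i x - f' i w) + avgG n f' w)
    (hz' : ∀ i, z' i = (1 / (1 + η * κ)) • (η • κ • x + z - (η / Lbar n L) • g i))
    (hv' : ∀ i, v' i = x + θ₁ • (z' i - z))
    (Z V : Euc d → ℝ)
    (hZ : ∀ u, Z u = (Lbar n L * (1 + η * κ) / (2 * η)) * ‖u - xstar‖ ^ 2)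
    (hV : ∀ u, V u = (1 / θ₁) * (avgF n f u - avgF n f xstar)) :
    ∑ i, p i * (Z (z' i) + V (v' i)) ≤
      (1 - θ₁ - θ₂) * V v + (1 / (1 + η * κ)) * Z z +
      (θ₂ / θ₁) * (avgF n f w - avgF n f xstar) +
      (θ₂ / (2 * Lbar n L * θ₁)) * (Ve n f' p x w - Ve n f' (pIS n L) x w) := by

  have hne : Nonempty (Fin n) := ⟨⟨0, hn⟩⟩
  have hnR : (0:ℝ) < (n:ℝ) := by exact_mod_cast hn
  have hnne : (n:ℝ) ≠ 0 := ne_of_gt hnR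
  set Lb := Lbar n L with hLbdef
  have hLb : 0 < Lb := by
    rw [hLbdef, Lbar]
    exact mul_pos (by positivity) (Finset.sum_pos (fun i _ => hLpos i) Finset.univ_nonempty)
  have hLbne : Lb ≠ 0 := ne_of_gt hLb
  have hκpos : 0 < κ := hκ ▸ div_pos hμ hLb
  have hηpos : 0 < η := by rw [hη]; positivity
  have hηne : η ≠ 0 := ne_of_gt hηpos
  have hηκpos : (0:ℝ) < 1 + η * κ := by positivity
  have hηκne : (1:ℝ) + η * κ ≠ 0 := ne_of_gt hηκpos
  have hθ₁ne : θ₁ ≠ 0 := ne_of_gt hθ₁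
  have hθ₂ne : θ₂ ≠ 0 := ne_of_gt hθ₂
  have hμLbκ : μ = Lb * κ := by rw [hκ]; field_simp
  -- gradient of the average
  have hFgrad : ∀ u, HasGradientAt (avgF n f) (avgG n f' u) u := by
    intro u
    rw [hasGradientAt_iff_hasFDerivAt]
    have hsum : HasFDerivAt (fun y => ∑ i, f i y)
        (∑ i, InnerProductSpace.toDual ℝ (Euc d) (f' i u)) u :=
      HasFDerivAt.fun_sum (fun i _ => (hgrad i u).hasFDerivAt)
    have hmul := hsum.const_mul ((1:ℝ)/(n:ℝ))
    have hmap : InnerProductSpace.toDual ℝ (Euc d) (avgG n f' u)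
        = ((1:ℝ)/(n:ℝ)) • ∑ i, InnerProductSpace.toDual ℝ (Euc d) (f' i u) := by
      rw [avgG, _root_.map_smul, map_sum]
    rw [hmap]
    exact hmul
  -- Lipschitz constant of the average gradient
  have hGlip : ∀ u v, ‖avgG n f' u - avgG n f' v‖ ≤ Lb * ‖u - v‖ := by
    intro u v
    rw [avgG, avgG, ← smul_sub, ← Finset.sum_sub_distrib, norm_smul]
    have h1 : ‖∑ i, (f' i u - f' i v)‖ ≤ ∑ i, (L i * ‖u - v‖) :=
      le_trans (norm_sum_le _ _) (Finset.sum_le_sum (fun i _ => hsmooth i u v))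
    have h2 : ‖(1:ℝ)/(n:ℝ)‖ = 1/(n:ℝ) := by
      rw [Real.norm_eq_abs, abs_of_pos (by positivity)]
    rw [h2]
    calc 1/(n:ℝ) * ‖∑ i, (f' i u - f' i v)‖ ≤ 1/(n:ℝ) * ((∑ i, L i) * ‖u - v‖) := by
          rw [← Finset.sum_mul] at h1
          exact mul_le_mul_of_nonneg_left h1 (by positivity)
      _ = Lb * ‖u - v‖ := by rw [hLbdef, Lbar]; ring
  set G := avgG n f' x with hG
  set Fx := avgF n f x with hFx
  set Fs := avgF n f xstar with hFs
  set Fw := avgF n f w with hFw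
  set Fv := avgF n f v with hFv
  set cc := θ₂ / (2 * Lb * θ₁) with hcc
  have hccpos : 0 < cc := by rw [hcc]; positivity
  -- per-index key inequality
  have key : ∀ i, Z (z' i) + V (v' i) ≤
      (1/θ₁) * (Fx - Fs) + μ/2 * ‖x - xstar‖^2 + Lb/(2*η) * ‖z - xstar‖^2
      + cc * ‖G - g i‖^2 + ⟪g i, xstar - z⟫ := by
    intro i
    -- closed form for g i
    have hgi : g i = μ • (x - z' i) + (Lb / η) • (z - z' i) := by
      rw [hz' i, hμLbκ]
      match_scalars <;> field_simp <;> ring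
    have hprox : ⟪g i, z' i - xstar⟫ =
        μ/2 * (‖x - xstar‖^2 - ‖z' i - x‖^2 - ‖z' i - xstar‖^2)
        + Lb/(2*η) * (‖z - xstar‖^2 - ‖z' i - z‖^2 - ‖z' i - xstar‖^2) := by
      rw [hgi, inner_add_left, real_inner_smul_left, real_inner_smul_left,
        polar_identity, polar_identity, norm_sub_rev x (z' i), norm_sub_rev z (z' i)]
      ring
    -- descent step
    have hvx : v' i - x = θ₁ • (z' i - z) := by rw [hv' i]; abel
    have hdesc := descent_lemma (avgF n f) (avgG n f') Lb hLb.le hFgrad hGlip x (v' i)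
    rw [hvx] at hdesc
    have h1 : ⟪G, θ₁ • (z' i - z)⟫ = θ₁ * ⟪G, z' i - z⟫ := real_inner_smul_right _ _ _
    have h2 : ‖θ₁ • (z' i - z)‖^2 = θ₁^2 * ‖z' i - z‖^2 := by
      rw [norm_smul, Real.norm_eq_abs, abs_of_pos hθ₁, mul_pow]
    rw [h1, h2] at hdesc
    have hstep1 : V (v' i) ≤ (1/θ₁) * (Fx - Fs) + ⟪G, z' i - z⟫
        + Lb * θ₁ / 2 * ‖z' i - z‖^2 := by
      rw [hV]
      calc (1/θ₁) * (avgF n f (v' i) - Fs)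
          ≤ (1/θ₁) * ((Fx + θ₁ * ⟪G, z' i - z⟫ + Lb/2 * (θ₁^2 * ‖z' i - z‖^2)) - Fs) := by
            apply mul_le_mul_of_nonneg_left (by linarith) (by positivity)
        _ = (1/θ₁) * (Fx - Fs) + ⟪G, z' i - z⟫ + Lb * θ₁ / 2 * ‖z' i - z‖^2 := by
            field_simp; ring
    have hdec : ⟪G, z' i - z⟫ = ⟪G - g i, z' i - z⟫ + ⟪g i, z' i - xstar⟫
        + ⟪g i, xstar - z⟫ := by
      rw [inner_sub_left]
      have h3 : ⟪g i, z' i - z⟫ = ⟪g i, z' i - xstar⟫ + ⟪g i, xstar - z⟫ := by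
        rw [← inner_add_right]
        congr 1
        abel
      linarith
    have hy := young_ineq (G - g i) (z' i - z) (Lb * θ₁ / θ₂) (by positivity)
    have hc1 : 1 / (2 * (Lb * θ₁ / θ₂)) = cc := by
      rw [hcc]; field_simp
    have hc2 : (Lb * θ₁ / θ₂) / 2 = Lb * θ₁ / (2 * θ₂) := by ring
    rw [hc1, hc2] at hy
    have hZv : Z (z' i) = (μ/2 + Lb/(2*η)) * ‖z' i - xstar‖^2 := by
      rw [hZ, hμLbκ]
      congr 1
      field_simp
      ring
    have hcoefQ : Lb * θ₁ / 2 * ‖z' i - z‖^2 + Lb * θ₁ / (2 * θ₂) * ‖z' i - z‖^2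
        = Lb/(2*η) * ‖z' i - z‖^2 := by
      rw [← add_mul]
      congr 1
      rw [hη]
      field_simp
      ring
    have h5 : 0 ≤ μ/2 * ‖z' i - x‖^2 := by positivity
    have hZexp : (μ/2 + Lb/(2*η)) * ‖z' i - xstar‖^2
        = μ/2 * ‖z' i - xstar‖^2 + Lb/(2*η) * ‖z' i - xstar‖^2 := by ring
    linarith [hstep1, hdec, hy, hprox, hZv, hcoefQ, h5, hZexp]
  -- sum of stochastic gradients
  have hGw : G - avgG n f' w = (1/(n:ℝ)) • ∑ i, (f' i x - f' i w) := by
    rw [hG, avgG, avgG, ← smul_sub, Finset.sum_sub_distrib]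
  have hsumg : ∑ i, p i • g i = G := by
    have hterm : ∀ i ∈ Finset.univ, p i • g i
        = (1/(n:ℝ)) • (f' i x - f' i w) + p i • avgG n f' w := by
      intro i _
      have hpine : p i ≠ 0 := ne_of_gt (hp i)
      rw [hg i, smul_add, smul_smul]
      congr 2
      field_simp [mul_comm]
    rw [Finset.sum_congr rfl hterm, Finset.sum_add_distrib, ← Finset.smul_sum,
      ← Finset.sum_smul, hp1, one_smul, ← hGw]
    abel
  have hsuminner : ∑ i, p i * ⟪g i, xstar - z⟫ = ⟪G, xstar - z⟫ := by
    rw [← hsumg, sum_inner]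
    apply Finset.sum_congr rfl
    intro i _
    rw [real_inner_smul_left]
  -- variance bound
  have hvar : ∑ i, p i * ‖G - g i‖^2 ≤ Ve n f' p x w := by
    set Db : Euc d := G - avgG n f' w with hDb
    have hterm : ∀ i ∈ Finset.univ, p i * ‖G - g i‖^2
        = p i * ‖Db‖^2 - (2/(n:ℝ)) * ⟪Db, f' i x - f' i w⟫
          + 1/((n:ℝ)^2 * p i) * ‖f' i x - f' i w‖^2 := by
      intro i _
      have hgG : G - g i = Db - (1/((n:ℝ) * p i)) • (f' i x - f' i w) := by
        rw [hg i, hDb]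
        abel
      rw [hgG, norm_sub_sq_real, real_inner_smul_right, norm_smul, Real.norm_eq_abs,
        abs_of_pos (one_div_pos.2 (mul_pos hnR (hp i))), mul_pow]
      have hpine : p i ≠ 0 := ne_of_gt (hp i)
      field_simp
    rw [Finset.sum_congr rfl hterm, Finset.sum_add_distrib, Finset.sum_sub_distrib,
      ← Finset.sum_mul, hp1, ← Finset.mul_sum]
    have hVe : Ve n f' p x w = ∑ i, 1/((n:ℝ)^2 * p i) * ‖f' i x - f' i w‖^2 := by
      rw [Ve, Finset.mul_sum]
      apply Finset.sum_congr rfl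
      intro i _
      have hpine : p i ≠ 0 := ne_of_gt (hp i)
      field_simp
    have hin : ∑ i, ⟪Db, f' i x - f' i w⟫ = (n:ℝ) * ‖Db‖^2 := by
      have h6 : ⟪Db, (1/(n:ℝ)) • ∑ i, (f' i x - f' i w)⟫ = ‖Db‖^2 := by
        rw [← hGw, real_inner_self_eq_norm_sq]
      rw [real_inner_smul_right, inner_sum] at h6
      rw [← h6, ← mul_assoc, mul_one_div, div_self hnne, one_mul]
    rw [hin, hVe]
    have h8 : (2/(n:ℝ)) * ((n:ℝ) * ‖Db‖^2) = 2 * ‖Db‖^2 := by field_simp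
    rw [h8]
    linarith [sq_nonneg ‖Db‖]
  -- bound on V_e(p^IS)
  set B := Fw - Fx - ⟪G, w - x⟫ with hB
  have hIS : Ve n f' (pIS n L) x w ≤ 2 * Lb * B := by
    have hco : ∀ i, 1/(2 * L i) * ‖f' i x - f' i w‖^2
        ≤ f i w - f i x - ⟪f' i x, w - x⟫ := by
      intro i
      have h9 := cocoercivity (f i) (f' i) (L i) (hLpos i) (hgrad i) (hconv i)
        (fun u v => hsmooth i u v) x w
      rwa [norm_sub_rev] at h9
    have hVeIS : Ve n f' (pIS n L) x w
        = ∑ i, (Lb/(n:ℝ)) * ((1/(L i)) * ‖f' i x - f' i w‖^2) := by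
      rw [Ve, Finset.mul_sum]
      apply Finset.sum_congr rfl
      intro i _
      rw [pIS]
      have hLine : L i ≠ 0 := ne_of_gt (hLpos i)
      field_simp
      ring
    have hsum1 : ∑ i, (Lb/(n:ℝ)) * ((1/(L i)) * ‖f' i x - f' i w‖^2)
        ≤ ∑ i, (2*Lb/(n:ℝ)) * (f i w - f i x - ⟪f' i x, w - x⟫) := by
      apply Finset.sum_le_sum
      intro i _
      have hLine : L i ≠ 0 := ne_of_gt (hLpos i)
      have h10 : (Lb/(n:ℝ)) * ((1/(L i)) * ‖f' i x - f' i w‖^2)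
          = (2*Lb/(n:ℝ)) * (1/(2 * L i) * ‖f' i x - f' i w‖^2) := by
        field_simp
      rw [h10]
      exact mul_le_mul_of_nonneg_left (hco i) (by positivity)
    have hsum2 : ∑ i, (2*Lb/(n:ℝ)) * (f i w - f i x - ⟪f' i x, w - x⟫) = 2 * Lb * B := by
      rw [← Finset.mul_sum]
      have hGin : ⟪G, w - x⟫ = (1/(n:ℝ)) * ∑ i, ⟪f' i x, w - x⟫ := by
        rw [hG, avgG, real_inner_smul_left, sum_inner]
      have hsplit : ∑ i, (f i w - f i x - ⟪f' i x, w - x⟫)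
          = ∑ i, f i w - ∑ i, f i x - ∑ i, ⟪f' i x, w - x⟫ := by
        rw [Finset.sum_sub_distrib, Finset.sum_sub_distrib]
      rw [hsplit, hB, hFw, hFx, avgF, avgF, hGin]
      field_simp
    rw [hVeIS]
    linarith
  -- summed key inequality
  set A := (1/θ₁) * (Fx - Fs) + μ/2 * ‖x - xstar‖^2 + Lb/(2*η) * ‖z - xstar‖^2 with hA
  have hsumtotal : ∑ i, p i * (Z (z' i) + V (v' i))
      ≤ A + cc * ∑ i, p i * ‖G - g i‖^2 + ⟪G, xstar - z⟫ := by
    calc ∑ i, p i * (Z (z' i) + V (v' i))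
        ≤ ∑ i, p i * (A + cc * ‖G - g i‖^2 + ⟪g i, xstar - z⟫) :=
          Finset.sum_le_sum (fun i _ =>
            mul_le_mul_of_nonneg_left (by rw [hA]; exact key i) (hp i).le)
      _ = ∑ i, (p i * A + cc * (p i * ‖G - g i‖^2) + p i * ⟪g i, xstar - z⟫) := by
          apply Finset.sum_congr rfl; intro i _; ring
      _ = A + cc * ∑ i, p i * ‖G - g i‖^2 + ⟪G, xstar - z⟫ := by
          rw [Finset.sum_add_distrib, Finset.sum_add_distrib, ← Finset.sum_mul, hp1,
            ← Finset.mul_sum, hsuminner, one_mul]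
  -- strong convexity at x and x*
  have hsc' := hsc x xstar
  rw [norm_sub_rev xstar x] at hsc'
  -- decomposition of x - z
  have hxz : θ₁ • (x - z) = θ₂ • (w - x) + (1 - θ₁ - θ₂) • (v - x) := by
    rw [hx]; module
  have hixz : θ₁ * ⟪G, x - z⟫ = θ₂ * ⟪G, w - x⟫ + (1 - θ₁ - θ₂) * ⟪G, v - x⟫ := by
    rw [← real_inner_smul_right, ← real_inner_smul_right, ← real_inner_smul_right,
      ← inner_add_right, hxz]
  have hGv : ⟪G, v - x⟫ ≤ Fv - Fx := by
    have h11 := hsc x v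
    have h11b : 0 ≤ μ * ‖v - x‖^2 := mul_nonneg hμ.le (sq_nonneg _)
    linarith
  have hsplit2 : ⟪G, xstar - z⟫ = ⟪G, xstar - x⟫ + ⟪G, x - z⟫ := by
    rw [← inner_add_right]
    congr 1
    abel
  have e1 : (1/(1 + η*κ)) * Z z = Lb/(2*η) * ‖z - xstar‖^2 := by
    rw [hZ]
    field_simp
  have e4 : ⟪G, x - z⟫ = (θ₂/θ₁) * ⟪G, w - x⟫ + ((1 - θ₁ - θ₂)/θ₁) * ⟪G, v - x⟫ := by
    rw [div_mul_eq_mul_div, div_mul_eq_mul_div, ← add_div, ← hixz,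
      mul_div_cancel_left₀ _ hθ₁ne]
  have e5 : ⟪G, w - x⟫ = Fw - Fx - B := by rw [hB]; ring
  have hθ3 : 0 ≤ (1 - θ₁ - θ₂)/θ₁ := by
    apply div_nonneg (by linarith) hθ₁.le
  have hGv2 : ((1 - θ₁ - θ₂)/θ₁) * ⟪G, v - x⟫ ≤ ((1 - θ₁ - θ₂)/θ₁) * (Fv - Fx) :=
    mul_le_mul_of_nonneg_left hGv hθ3
  have hvar2 : cc * ∑ i, p i * ‖G - g i‖^2
      ≤ cc * (Ve n f' p x w - Ve n f' (pIS n L) x w) + (θ₂/θ₁) * B := by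
    have h12 : ∑ i, p i * ‖G - g i‖^2
        ≤ (Ve n f' p x w - Ve n f' (pIS n L) x w) + 2 * Lb * B := by linarith
    have h13 := mul_le_mul_of_nonneg_left h12 hccpos.le
    have h14 : cc * (2 * Lb * B) = (θ₂/θ₁) * B := by
      rw [hcc]; field_simp
    rw [mul_add, h14] at h13
    exact h13
  have e2 : (1 - θ₁ - θ₂) * V v = ((1 - θ₁ - θ₂)/θ₁) * (Fv - Fs) := by
    rw [hV]; ring
  have efin : A + (Fs - Fx - μ/2 * ‖x - xstar‖^2) + (θ₂/θ₁) * (Fw - Fx - B)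
      + ((1 - θ₁ - θ₂)/θ₁) * (Fv - Fx) + (θ₂/θ₁) * B
      = ((1 - θ₁ - θ₂)/θ₁) * (Fv - Fs) + Lb/(2*η) * ‖z - xstar‖^2
      + (θ₂/θ₁) * (Fw - Fs) := by
    rw [hA]
    field_simp
    ring
  rw [e1, e2]
  calc ∑ i, p i * (Z (z' i) + V (v' i))
      ≤ A + cc * ∑ i, p i * ‖G - g i‖^2 + ⟪G, xstar - z⟫ := hsumtotal
    _ ≤ A + (cc * (Ve n f' p x w - Ve n f' (pIS n L) x w) + (θ₂/θ₁) * B)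
        + ((Fs - Fx - μ/2 * ‖x - xstar‖^2)
          + ((θ₂/θ₁) * (Fw - Fx - B) + ((1 - θ₁ - θ₂)/θ₁) * (Fv - Fx))) := by
        have h15 : ⟪G, xstar - x⟫ ≤ Fs - Fx - μ/2 * ‖x - xstar‖^2 := by linarith
        have h16 : ⟪G, x - z⟫ ≤ (θ₂/θ₁) * (Fw - Fx - B)
            + ((1 - θ₁ - θ₂)/θ₁) * (Fv - Fx) := by
          rw [e4, e5]
          linarith
        linarith [hvar2, hsplit2]
    _ = ((1 - θ₁ - θ₂)/θ₁) * (Fv - Fs) + Lb/(2*η) * ‖z - xstar‖^2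
        + (θ₂/θ₁) * (Fw - Fs) + cc * (Ve n f' p x w - Ve n f' (pIS n L) x w) := by
        linarith [efin]
    _ = ((1 - θ₁ - θ₂)/θ₁) * (Fv - Fs) + Lb/(2*η) * ‖z - xstar‖^2
        + (θ₂/θ₁) * (Fw - Fs)
        + θ₂ / (2 * Lb * θ₁) * (Ve n f' p x w - Ve n f' (pIS n L) x w) := by
        rw [hcc]
    _ = _ := by ring
end

section
/- Suppose each f_i is convex and L_i-smooth and F is μ-strongly convex with μ > 0 and minimizer x*. Let ρ ∈ (0,1], θ₂ = 1/2, 0 < θ₁ ≤ 1/2, κ = μ/L̄, η = θ₂/((1 + θ₂)θ₁), and α₂ = max{1/(1 + ηκ), 1 − θ₁/2, 1 − ρθ₁/(1 + θ₁)}. Let z, w, v ∈ ℝ^d, x = θ₁z + θ₂w + (1 − θ₁ − θ₂)v, and for a probability vector p with positive entries set g_i = (1/(n p_i))(∇f_i(x) − ∇f_i(w)) + ∇F(w), z'_i = (1/(1 + ηκ))(ηκ·x + z − (η/L̄)g_i), v'_i = x + θ₁(z'_i − z). With Z(u) = (L̄(1 + ηκ)/(2η))‖u − x*‖², V(u) =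 (1/θ₁)(F(u) − F(x*)), and W(u) = (θ₂(1 + θ₁)/(ρθ₁))(F(u) − F(x*)), the one-step AS-LKatyusha inequality holds: ∑_{i=1}^n p_i (Z(z'_i) + V(v'_i)) + (1 − ρ)·W(w) + ρ·W(v) ≤ α₂(Z(z) + V(v) + W(w)) + (1/(4L̄θ₁))(V_e(p; x, w) − V_e(p^IS; x, w)). -/
open MeasureTheory Finset
open scoped RealInnerProductSpace BigOperators

lemma my_descent_s17 {d : ℕ} (f : Euc d → ℝ) (f' : Euc d → Euc d) (L : ℝ) (hL : 0 ≤ L)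
    (hgrad : ∀ x, HasGradientAt f (f' x) x)
    (hsmooth : ∀ x y, ‖f' x - f' y‖ ≤ L * ‖x - y‖) (x y : Euc d) :
    f y ≤ f x + ⟪f' x, y - x⟫ + L / 2 * ‖y - x‖ ^ 2 := by
  set γ : ℝ → Euc d := fun t => x + t • (y - x) with hγ
  have hγd : ∀ t : ℝ, HasDerivAt γ (y - x) t := by
    intro t
    exact (((hasDerivAt_id t).smul_const (y - x)).const_add x).congr_deriv (one_smul _ _)
  have hφ : ∀ t : ℝ, HasDerivAt (fun s => f (γ s)) ⟪f' (γ t), y - x⟫ t := by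
    intro t
    have h1 := (hgrad (γ t)).hasFDerivAt.comp_hasDerivAt t (hγd t)
    simp at h1; exact h1
  have hcontf' : Continuous f' := by
    rcases eq_or_lt_of_le hL with h | h
    · have : ∀ a b, f' a = f' b := by
        intro a b
        have := hsmooth a b
        rw [← h] at this
        simpa [norm_le_zero_iff, sub_eq_zero] using this
      have he : f' = fun _ => f' x := funext fun a => this a x
      rw [he]; exact continuous_const
    · have : LipschitzWith (Real.toNNReal L) f' := by
        apply LipschitzWith.of_dist_le_mul
        intro a b
        simpa [dist_eq_norm, Real.coe_toNNReal L hL] using hsmooth a b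
      exact this.continuous
  have hcont : Continuous fun t : ℝ => ⟪f' (γ t), y - x⟫ := by
    apply Continuous.inner
    · exact hcontf'.comp (by continuity)
    · exact continuous_const
  have hint : IntervalIntegrable (fun t : ℝ => ⟪f' (γ t), y - x⟫) MeasureTheory.volume 0 1 :=
    hcont.intervalIntegrable 0 1
  have hFTC : ∫ t in (0:ℝ)..1, ⟪f' (γ t), y - x⟫ = f (γ 1) - f (γ 0) :=
    intervalIntegral.integral_eq_sub_of_hasDerivAt (fun t _ => hφ t) hint
  have hγ0 : γ 0 = x := by simp [hγ]
  have hγ1 : γ 1 = y := by simp [hγ]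
  have hbound : ∫ t in (0:ℝ)..1, (⟪f' (γ t), y - x⟫ - ⟪f' x, y - x⟫) ≤
      ∫ t in (0:ℝ)..1, L * t * ‖y - x‖ ^ 2 := by
    apply intervalIntegral.integral_mono_on (by norm_num)
    · exact (hcont.sub continuous_const).intervalIntegrable 0 1
    · exact (by continuity : Continuous fun t : ℝ => L * t * ‖y - x‖ ^ 2).intervalIntegrable 0 1
    · intro t ht
      have h1 : ⟪f' (γ t), y - x⟫ - ⟪f' x, y - x⟫ = ⟪f' (γ t) - f' x, y - x⟫ := by
        rw [inner_sub_left]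
      rw [h1]
      calc ⟪f' (γ t) - f' x, y - x⟫ ≤ ‖f' (γ t) - f' x‖ * ‖y - x‖ := real_inner_le_norm _ _
        _ ≤ (L * ‖γ t - x‖) * ‖y - x‖ := by
            apply mul_le_mul_of_nonneg_right (hsmooth _ _) (norm_nonneg _)
        _ = L * t * ‖y - x‖ ^ 2 := by
            have : γ t - x = t • (y - x) := by simp [hγ]
            rw [this, norm_smul, Real.norm_eq_abs, abs_of_nonneg ht.1]
            ring
  have hsub : ∫ t in (0:ℝ)..1, (⟪f' (γ t), y - x⟫ - ⟪f' x, y - x⟫) =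
      (f y - f x) - ⟪f' x, y - x⟫ := by
    rw [intervalIntegral.integral_sub hint (intervalIntegrable_const)]
    rw [hFTC, hγ0, hγ1]
    simp
  have hval : ∫ t in (0:ℝ)..1, L * t * ‖y - x‖ ^ 2 = L / 2 * ‖y - x‖ ^ 2 := by
    have : (fun t : ℝ => L * t * ‖y - x‖ ^ 2) = fun t : ℝ => (L * ‖y - x‖ ^ 2) * t := by
      funext t; ring
    rw [this, intervalIntegral.integral_const_mul, integral_id]
    ring
  rw [hsub, hval] at hbound
  linarith

lemma my_cocoercive_s17 {d : ℕ} (f : Euc d → ℝ) (f' : Euc d → Euc d) (L : ℝ) (hL : 0 < L)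
    (hgrad : ∀ x, HasGradientAt f (f' x) x)
    (hconv : ∀ x y, f x + ⟪f' x, y - x⟫ ≤ f y)
    (hsmooth : ∀ x y, ‖f' x - f' y‖ ≤ L * ‖x - y‖) (x w : Euc d) :
    ‖f' x - f' w‖ ^ 2 ≤ 2 * L * (f w - f x - ⟪f' x, w - x⟫) := by
  set D : Euc d := f' w - f' x with hD
  set u : Euc d := w - (1 / L) • D with hu
  have h1 : f u ≤ f w + ⟪f' w, u - w⟫ + L / 2 * ‖u - w‖ ^ 2 :=
    my_descent_s17 f f' L hL.le hgrad hsmooth w u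
  have h2 : f x + ⟪f' x, u - x⟫ ≤ f u := hconv x u
  have huw : u - w = -((1 / L) • D) := by rw [hu]; abel
  have e1 : ⟪f' w, u - w⟫ = -(1 / L) * ⟪f' w, D⟫ := by
    rw [huw, inner_neg_right, real_inner_smul_right]; ring
  have e2 : ‖u - w‖ ^ 2 = (1 / L) ^ 2 * ‖D‖ ^ 2 := by
    rw [huw, norm_neg, norm_smul, Real.norm_eq_abs, mul_pow, sq_abs]
  have e3 : ⟪f' x, u - x⟫ = ⟪f' x, w - x⟫ - (1 / L) * ⟪f' x, D⟫ := by
    have : u - x = (w - x) - (1 / L) • D := by rw [hu]; abel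
    rw [this, inner_sub_right, real_inner_smul_right]
  have e4 : ⟪f' w, D⟫ - ⟪f' x, D⟫ = ‖D‖ ^ 2 := by
    rw [← inner_sub_left, ← hD, real_inner_self_eq_norm_sq]
  have e5 : ‖f' x - f' w‖ = ‖D‖ := by rw [hD, norm_sub_rev]
  rw [e5]
  rw [e1, e2] at h1
  rw [e3] at h2
  have hL' : (0:ℝ) < 1 / L := by positivity
  have e4' : (1/L) * ⟪f' w, D⟫ - (1/L) * ⟪f' x, D⟫ = (1/L) * ‖D‖ ^ 2 := by
    linear_combination (1/L) * e4
  have ecoef : L / 2 * ((1 / L) ^ 2 * ‖D‖ ^ 2) = (1/2) * ((1/L) * ‖D‖ ^ 2) := by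
    field_simp
  have hstep : (1/2) * ((1/L) * ‖D‖ ^ 2) ≤ f w - f x - ⟪f' x, w - x⟫ := by
    rw [ecoef] at h1
    linarith
  have := mul_le_mul_of_nonneg_left hstep (by positivity : (0:ℝ) ≤ 2*L)
  have ecoef2 : 2*L*((1/2) * ((1/L) * ‖D‖ ^ 2)) = ‖D‖ ^ 2 := by field_simp
  linarith

lemma my_young (c t A B : ℝ) (hc : 0 < c) :
    t * (A * B) ≤ 1 / (4 * c) * A ^ 2 + c * t ^ 2 * B ^ 2 := by
  have e : 1 / (4 * c) * A ^ 2 + c * t ^ 2 * B ^ 2 - t * (A * B)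
      = (1 / (4 * c)) * (A - 2 * c * t * B) ^ 2 := by
    field_simp; ring
  nlinarith [mul_nonneg (le_of_lt (by positivity : (0:ℝ) < 1/(4*c))) (sq_nonneg (A - 2*c*t*B))]

lemma my_tri {d : ℕ} (a b c : Euc d) :
    ⟪a - b, b - c⟫ = (‖a - c‖ ^ 2 - ‖a - b‖ ^ 2 - ‖b - c‖ ^ 2) / 2 := by
  have h := norm_add_sq_real (a - b) (b - c)
  have e : (a - b) + (b - c) = a - c := by abel
  rw [e] at h
  linarith

section facts
variable {d n : ℕ} (f : Fin n → Euc d → ℝ) (f' : Fin n → Euc d → Euc d) (L : Fin n → ℝ)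

lemma my_hFgrad (hgrad : ∀ i x, HasGradientAt (f i) (f' i x) x) (y : Euc d) :
    HasGradientAt (avgF n f) (avgG n f' y) y := by
  have hs : HasFDerivAt (fun u => ∑ i, f i u)
      (∑ i, (InnerProductSpace.toDual ℝ (Euc d)) (f' i y)) y :=
    HasFDerivAt.fun_sum fun i _ => (hgrad i y)
  have h2 := hs.const_mul ((1:ℝ)/n)
  have hEq : (InnerProductSpace.toDual ℝ (Euc d)) (avgG n f' y)
      = ((1:ℝ)/(n:ℝ)) • ∑ i, (InnerProductSpace.toDual ℝ (Euc d)) (f' i y) := by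
    unfold avgG
    simp [map_sum]
  rw [HasGradientAt, HasGradientAtFilter, hEq]
  exact h2

lemma my_hFconv (hn : 0 < n) (hconv : ∀ i x y, f i x + ⟪f' i x, y - x⟫ ≤ f i y)
    (a b : Euc d) : avgF n f a + ⟪avgG n f' a, b - a⟫ ≤ avgF n f b := by
  have h1 : ∑ i, (f i a + ⟪f' i a, b - a⟫) ≤ ∑ i, f i b :=
    Finset.sum_le_sum fun i _ => hconv i a b
  have h2 : (0:ℝ) ≤ 1/(n:ℝ) := by positivity
  calc avgF n f a + ⟪avgG n f' a, b - a⟫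
      = (1/(n:ℝ)) * ∑ i, (f i a + ⟪f' i a, b - a⟫) := by
        unfold avgF avgG
        rw [real_inner_smul_left, sum_inner, Finset.sum_add_distrib]
        ring
    _ ≤ (1/(n:ℝ)) * ∑ i, f i b := mul_le_mul_of_nonneg_left h1 h2
    _ = avgF n f b := rfl

lemma my_hFsmooth (hsmooth : ∀ i x y, ‖f' i x - f' i y‖ ≤ L i * ‖x - y‖) (a b : Euc d) :
    ‖avgG n f' a - avgG n f' b‖ ≤ Lbar n L * ‖a - b‖ := by
  have e : avgG n f' a - avgG n f' b = (1/(n:ℝ)) • ∑ i, (f' i a - f' i b) := by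
    unfold avgG; rw [Finset.sum_sub_distrib, smul_sub]
  rw [e, norm_smul, Real.norm_eq_abs, abs_of_nonneg (by positivity)]
  calc (1/(n:ℝ)) * ‖∑ i, (f' i a - f' i b)‖
      ≤ (1/(n:ℝ)) * ∑ i, ‖f' i a - f' i b‖ :=
        mul_le_mul_of_nonneg_left (norm_sum_le _ _) (by positivity)
    _ ≤ (1/(n:ℝ)) * ∑ i, L i * ‖a - b‖ :=
        mul_le_mul_of_nonneg_left (Finset.sum_le_sum fun i _ => hsmooth i a b) (by positivity)
    _ = Lbar n L * ‖a - b‖ := by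
        unfold Lbar; rw [← Finset.sum_mul]; ring

end facts

set_option maxHeartbeats 2000000 in
/-- one-step AS-LKatyusha contraction for the full potential. -/
theorem as_lkatyusha_one_step_contraction (d n : ℕ) (hd : 0 < d) (hn : 0 < n)
    (f : Fin n → Euc d → ℝ) (f' : Fin n → Euc d → Euc d) (L : Fin n → ℝ) (μ : ℝ)
    (hgrad : ∀ i x, HasGradientAt (f i) (f' i x) x)
    (hconv : ∀ i x y, f i x + ⟪f' i x, y - x⟫ ≤ f i y)
    (hLpos : ∀ i, 0 < L i)
    (hsmooth : ∀ i x y, ‖f' i x - f' i y‖ ≤ L i * ‖x - y‖)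
    (hμ : 0 < μ)
    (hsc : ∀ x y : Euc d,
      avgF n f x + ⟪avgG n f' x, y - x⟫ + (μ / 2) * ‖y - x‖ ^ 2 ≤ avgF n f y)
    (xstar : Euc d) (hmin : ∀ y, avgF n f xstar ≤ avgF n f y)
    (ρ θ₁ θ₂ κ η α₂ : ℝ) (hρ0 : 0 < ρ) (hρ1 : ρ ≤ 1)
    (hθ₂ : θ₂ = 1 / 2) (hθ₁0 : 0 < θ₁) (hθ₁ : θ₁ ≤ 1 / 2)
    (hκ : κ = μ / Lbar n L) (hη : η = θ₂ / ((1 + θ₂) * θ₁))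
    (hα₂ : α₂ = max (max (1 / (1 + η * κ)) (1 - θ₁ / 2)) (1 - ρ * θ₁ / (1 + θ₁)))
    (z w v : Euc d) (x : Euc d)
    (hx : x = θ₁ • z + θ₂ • w + (1 - θ₁ - θ₂) • v)
    (p : Fin n → ℝ) (hp : ∀ i, 0 < p i) (hp1 : ∑ i, p i = 1)
    (g z' v' : Fin n → Euc d)
    (hg : ∀ i, g i = (1 / ((n : ℝ) * p i)) • (f' i x - f' i w) + avgG n f' w)
    (hz' : ∀ i, z' i = (1 / (1 + η * κ)) • (η • κ • x + z - (η / Lbar n L) • g i))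
    (hv' : ∀ i, v' i = x + θ₁ • (z' i - z))
    (Z V W : Euc d → ℝ)
    (hZ : ∀ u, Z u = (Lbar n L * (1 + η * κ) / (2 * η)) * ‖u - xstar‖ ^ 2)
    (hV : ∀ u, V u = (1 / θ₁) * (avgF n f u - avgF n f xstar))
    (hW : ∀ u, W u = (θ₂ * (1 + θ₁) / (ρ * θ₁)) * (avgF n f u - avgF n f xstar)) :
    ∑ i, p i * (Z (z' i) + V (v' i)) + (1 - ρ) * W w + ρ * W v ≤
      α₂ * (Z z + V v + W w) +
      (1 / (4 * Lbar n L * θ₁)) * (Ve n f' p x w - Ve n f' (pIS n L) x w) := by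
  subst hθ₂
  have hn' : (0:ℝ) < n := by exact_mod_cast hn
  have hn0 : (n:ℝ) ≠ 0 := ne_of_gt hn'
  have hLb : 0 < Lbar n L := by
    unfold Lbar
    apply mul_pos (by positivity)
    exact Finset.sum_pos (fun i _ => hLpos i) (by simp [Finset.univ_nonempty_iff, Fin.pos_iff_nonempty.mp hn])
  have hLb0 : Lbar n L ≠ 0 := ne_of_gt hLb
  have hθ₁0' : θ₁ ≠ 0 := ne_of_gt hθ₁0
  have hηval : η = 1 / (3 * θ₁) := by
    rw [hη, div_eq_div_iff (by positivity) (by positivity)]; ring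
  have hηpos : 0 < η := by rw [hηval]; positivity
  have hκpos : 0 < κ := by rw [hκ]; positivity
  have hηκpos : (0:ℝ) < 1 + η * κ := by positivity
  have hηκ0 : (1 + η * κ) ≠ 0 := ne_of_gt hηκpos
  have hμκ : μ = Lbar n L * κ := by rw [hκ]; field_simp
  -- facts about F
  have hFgrad : ∀ y : Euc d, HasGradientAt (avgF n f) (avgG n f' y) y := my_hFgrad f f' hgrad
  have hFconv : ∀ a b : Euc d, avgF n f a + ⟪avgG n f' a, b - a⟫ ≤ avgF n f b :=
    my_hFconv f f' hn hconv
  have hFsmooth : ∀ a b : Euc d, ‖avgG n f' a - avgG n f' b‖ ≤ Lbar n L * ‖a - b‖ :=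
    my_hFsmooth f' L hsmooth
  have hFdescent : ∀ a b : Euc d, avgF n f b ≤ avgF n f a + ⟪avgG n f' a, b - a⟫
      + Lbar n L / 2 * ‖b - a‖ ^ 2 :=
    fun a b => my_descent_s17 (avgF n f) (avgG n f') (Lbar n L) hLb.le hFgrad hFsmooth a b
  -- Ve(pIS) ≤ 2 L̄ D_w
  have hVeIS : Ve n f' (pIS n L) x w ≤
      2 * Lbar n L * (avgF n f w - avgF n f x - ⟪avgG n f' x, w - x⟫) := by
    have hcoco : ∀ i, (1 / L i) * ‖f' i x - f' i w‖ ^ 2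
        ≤ 2 * (f i w - f i x - ⟪f' i x, w - x⟫) := by
      intro i
      have h := my_cocoercive_s17 (f i) (f' i) (L i) (hLpos i) (hgrad i) (hconv i) (hsmooth i) x w
      have h2 := mul_le_mul_of_nonneg_left h (le_of_lt (one_div_pos.mpr (hLpos i)))
      calc (1 / L i) * ‖f' i x - f' i w‖ ^ 2
          ≤ (1 / L i) * (2 * L i * (f i w - f i x - ⟪f' i x, w - x⟫)) := h2
        _ = 2 * (f i w - f i x - ⟪f' i x, w - x⟫) := by
            field_simp [ne_of_gt (hLpos i)]
    have e1 : Ve n f' (pIS n L) x w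
        = (Lbar n L / (n:ℝ)) * ∑ i, (1 / L i) * ‖f' i x - f' i w‖ ^ 2 := by
      unfold Ve pIS
      rw [Finset.mul_sum, Finset.mul_sum]
      apply Finset.sum_congr rfl
      intro i _
      field_simp [hn0, hLb0, ne_of_gt (hLpos i)]
    rw [e1]
    calc (Lbar n L / (n:ℝ)) * ∑ i, (1 / L i) * ‖f' i x - f' i w‖ ^ 2
        ≤ (Lbar n L / (n:ℝ)) * ∑ i, 2 * (f i w - f i x - ⟪f' i x, w - x⟫) :=
          mul_le_mul_of_nonneg_left (Finset.sum_le_sum fun i _ => hcoco i) (by positivity)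
      _ = 2 * Lbar n L * (avgF n f w - avgF n f x - ⟪avgG n f' x, w - x⟫) := by
          unfold avgF avgG
          rw [real_inner_smul_left, sum_inner]
          rw [Finset.sum_congr rfl (fun (i : Fin n) _ =>
            (by ring : 2 * (f i w - f i x - ⟪f' i x, w - x⟫)
              = 2 * f i w - 2 * f i x - 2 * ⟪f' i x, w - x⟫)),
            Finset.sum_sub_distrib, Finset.sum_sub_distrib,
            ← Finset.mul_sum, ← Finset.mul_sum, ← Finset.mul_sum]
          field_simp
  -- ∑ pᵢ • gᵢ = ∇F(x)
  have hgsum : ∑ i, p i • g i = avgG n f' x := by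
    have hterm : ∀ i : Fin n, p i • g i
        = ((1:ℝ)/(n:ℝ)) • (f' i x - f' i w) + p i • avgG n f' w := by
      intro i
      rw [hg i, smul_add, smul_smul]
      congr 2
      field_simp [ne_of_gt (hp i)]
    rw [Finset.sum_congr rfl fun i _ => hterm i, Finset.sum_add_distrib,
      ← Finset.smul_sum, ← Finset.sum_smul, hp1, one_smul,
      Finset.sum_sub_distrib, smul_sub]
    unfold avgG
    abel
  have hinner_sum : ∑ i, p i * ⟪g i, xstar - z⟫ = ⟪avgG n f' x, xstar - z⟫ := by
    rw [← hgsum, sum_inner]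
    exact Finset.sum_congr rfl fun i _ => (real_inner_smul_left _ _ _).symm
  -- variance bound
  have hvar : ∑ i, p i * ‖avgG n f' x - g i‖ ^ 2 ≤ Ve n f' p x w := by
    set h : Euc d := avgG n f' x - avgG n f' w with hh
    have hsum_a : ∑ i, (f' i x - f' i w) = (n:ℝ) • h := by
      rw [hh]
      unfold avgG
      rw [← smul_sub, smul_smul, Finset.sum_sub_distrib]
      rw [mul_one_div, div_self hn0, one_smul]
    have hterm : ∀ i : Fin n, p i * ‖avgG n f' x - g i‖ ^ 2
        = p i * ‖h‖ ^ 2 - (2/(n:ℝ)) * ⟪h, f' i x - f' i w⟫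
          + (1/(n:ℝ)^2) * ((1/p i) * ‖f' i x - f' i w‖ ^ 2) := by
      intro i
      have e : avgG n f' x - g i = h - (1/((n:ℝ) * p i)) • (f' i x - f' i w) := by
        rw [hg i, hh]; abel
      rw [e, norm_sub_sq_real, real_inner_smul_right, norm_smul, Real.norm_eq_abs,
        abs_of_pos (one_div_pos.mpr (mul_pos hn' (hp i))), mul_pow]
      field_simp [ne_of_gt (hp i)]
    rw [Finset.sum_congr rfl fun i _ => hterm i, Finset.sum_add_distrib,
      Finset.sum_sub_distrib, ← Finset.sum_mul, hp1, one_mul,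
      ← Finset.mul_sum, ← inner_sum, hsum_a, ← Finset.mul_sum]
    have e2 : (2/(n:ℝ)) * ⟪h, (n:ℝ) • h⟫ = 2 * ‖h‖ ^ 2 := by
      rw [real_inner_smul_right, real_inner_self_eq_norm_sq]
      field_simp
    rw [e2]
    unfold Ve
    clear_value h
    linarith [sq_nonneg ‖h‖]
  -- per-i key inequality
  have hkey : ∀ i, avgF n f (v' i) + θ₁ * Z (z' i) ≤
      avgF n f x + θ₁ * ⟪g i, xstar - z⟫ + θ₁ * (μ/2) * ‖x - xstar‖ ^ 2
      + (3/2) * θ₁^2 * Lbar n L * ‖z - xstar‖ ^ 2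
      + (1/(4 * Lbar n L)) * ‖avgG n f' x - g i‖ ^ 2 := by
    intro i
    have hd1 := hFdescent x (v' i)
    have e_vx : v' i - x = θ₁ • (z' i - z) := by rw [hv' i]; abel
    have e_in : ⟪avgG n f' x, v' i - x⟫ = θ₁ * ⟪avgG n f' x, z' i - z⟫ := by
      rw [e_vx, real_inner_smul_right]
    have e_norm : Lbar n L / 2 * ‖v' i - x‖ ^ 2
        = Lbar n L * θ₁^2 / 2 * ‖z' i - z‖ ^ 2 := by
      rw [e_vx, norm_smul, Real.norm_eq_abs, abs_of_pos hθ₁0, mul_pow]; ring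
    rw [e_in, e_norm] at hd1
    have e_split : ⟪avgG n f' x, z' i - z⟫
        = ⟪g i, z' i - z⟫ + ⟪avgG n f' x - g i, z' i - z⟫ := by
      rw [inner_sub_left]; ring
    have e_split' : θ₁ * ⟪avgG n f' x, z' i - z⟫
        = θ₁ * ⟪g i, z' i - z⟫ + θ₁ * ⟪avgG n f' x - g i, z' i - z⟫ := by
      rw [e_split]; ring
    have young : θ₁ * ⟪avgG n f' x - g i, z' i - z⟫
        ≤ 1/(4 * Lbar n L) * ‖avgG n f' x - g i‖ ^ 2
          + Lbar n L * θ₁^2 * ‖z' i - z‖ ^ 2 := by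
      calc θ₁ * ⟪avgG n f' x - g i, z' i - z⟫
          ≤ θ₁ * (‖avgG n f' x - g i‖ * ‖z' i - z‖) :=
            mul_le_mul_of_nonneg_left (real_inner_le_norm _ _) hθ₁0.le
        _ ≤ _ := my_young (Lbar n L) θ₁ _ _ hLb
    have hgid : g i = μ • (x - z' i) + (Lbar n L / η) • (z - z' i) := by
      have h1 : (1 + η*κ) • z' i = (η*κ) • x + z - (η/Lbar n L) • g i := by
        rw [hz' i, smul_smul, mul_one_div, div_self hηκ0, one_smul, smul_smul]
      have h2 : (η/Lbar n L) • g i = (((η*κ) • x + z) - (1+η*κ) • z' i) := by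
        rw [h1]; abel
      have h3 : g i = (Lbar n L/η) • (((η*κ) • x + z) - (1+η*κ) • z' i) := by
        rw [← h2, smul_smul]
        rw [show (Lbar n L/η)*(η/Lbar n L) = 1 by field_simp, one_smul]
      have h4 : (((η*κ) • x + z) - (1+η*κ) • z' i)
          = (η*κ) • (x - z' i) + (z - z' i) := by
        rw [add_smul, one_smul, smul_sub]; abel
      rw [h4, smul_add, smul_smul] at h3
      rw [show (Lbar n L/η)*(η*κ) = μ by rw [hμκ]; field_simp] at h3
      exact h3
    have e_z' : θ₁ * ⟪g i, z' i - z⟫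
        = θ₁ * ⟪g i, z' i - xstar⟫ + θ₁ * ⟪g i, xstar - z⟫ := by
      rw [show z' i - z = (z' i - xstar) + (xstar - z) by abel, inner_add_right]
      ring
    have hin1 : ⟪g i, z' i - xstar⟫
        = μ * ⟪x - z' i, z' i - xstar⟫ + (Lbar n L / η) * ⟪z - z' i, z' i - xstar⟫ := by
      rw [hgid, inner_add_left, real_inner_smul_left, real_inner_smul_left]
    have tri1 := my_tri x (z' i) xstar
    have tri2 := my_tri z (z' i) xstar
    have hcoef1 : θ₁ * (Lbar n L / η) = 3 * θ₁^2 * Lbar n L := by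
      rw [hηval]; field_simp
    have hSz : θ₁ * ⟪g i, z' i - xstar⟫
        = θ₁ * (μ/2) * (‖x - xstar‖^2 - ‖x - z' i‖^2 - ‖z' i - xstar‖^2)
        + (3/2) * θ₁^2 * Lbar n L
          * (‖z - xstar‖^2 - ‖z - z' i‖^2 - ‖z' i - xstar‖^2) := by
      linear_combination θ₁ * hin1 + (θ₁ * μ) * tri1 + (θ₁ * (Lbar n L / η)) * tri2
        + ((‖z - xstar‖^2 - ‖z - z' i‖^2 - ‖z' i - xstar‖^2)/2) * hcoef1
    rw [norm_sub_rev z (z' i)] at hSz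
    have hZB : θ₁ * Z (z' i) = ((3/2) * θ₁^2 * Lbar n L + θ₁ * (μ/2)) * ‖z' i - xstar‖^2 := by
      rw [hZ (z' i), hμκ, hηval]
      field_simp
    have hCnn : (0:ℝ) ≤ θ₁ * (μ/2) * ‖x - z' i‖^2 := by positivity
    linarith [hd1, e_split', young, e_z', hSz, hZB, hCnn]
  -- summed master inequality
  have hmaster : ∑ i, p i * (avgF n f (v' i) + θ₁ * Z (z' i)) ≤
      avgF n f x + θ₁ * ⟪avgG n f' x, xstar - z⟫ + θ₁ * (μ/2) * ‖x - xstar‖ ^ 2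
      + (3/2) * θ₁^2 * Lbar n L * ‖z - xstar‖ ^ 2
      + (1/(4 * Lbar n L)) * ∑ i, p i * ‖avgG n f' x - g i‖ ^ 2 := by
    have h1 : ∑ i, p i * (avgF n f (v' i) + θ₁ * Z (z' i))
        ≤ ∑ i, p i * (avgF n f x + θ₁ * ⟪g i, xstar - z⟫ + θ₁ * (μ/2) * ‖x - xstar‖ ^ 2
          + (3/2) * θ₁^2 * Lbar n L * ‖z - xstar‖ ^ 2
          + (1/(4 * Lbar n L)) * ‖avgG n f' x - g i‖ ^ 2) :=
      Finset.sum_le_sum fun i _ => mul_le_mul_of_nonneg_left (hkey i) (hp i).le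
    have h2 : ∑ i, p i * (avgF n f x + θ₁ * ⟪g i, xstar - z⟫ + θ₁ * (μ/2) * ‖x - xstar‖ ^ 2
          + (3/2) * θ₁^2 * Lbar n L * ‖z - xstar‖ ^ 2
          + (1/(4 * Lbar n L)) * ‖avgG n f' x - g i‖ ^ 2)
        = (avgF n f x + θ₁ * (μ/2) * ‖x - xstar‖ ^ 2
            + (3/2) * θ₁^2 * Lbar n L * ‖z - xstar‖ ^ 2) * (∑ i, p i)
          + θ₁ * ∑ i, p i * ⟪g i, xstar - z⟫
          + (1/(4 * Lbar n L)) * ∑ i, p i * ‖avgG n f' x - g i‖ ^ 2 := by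
      rw [Finset.mul_sum, Finset.mul_sum, Finset.mul_sum, ← Finset.sum_add_distrib,
        ← Finset.sum_add_distrib]
      exact Finset.sum_congr rfl fun i _ => by ring
    rw [h2, hp1, hinner_sum] at h1
    linarith [h1]
  -- scalar decomposition of the cross term
  have hxdecomp : θ₁ * ⟪avgG n f' x, xstar - z⟫ = θ₁ * ⟪avgG n f' x, xstar - x⟫
      + (1/2) * ⟪avgG n f' x, w - x⟫ + (1 - θ₁ - 1/2) * ⟪avgG n f' x, v - x⟫ := by
    have hvec : θ₁ • (xstar - z) = θ₁ • (xstar - x) + (1/2 : ℝ) • (w - x)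
        + (1 - θ₁ - 1/2 : ℝ) • (v - x) := by
      rw [hx]; module
    have h := congrArg (fun u => ⟪avgG n f' x, u⟫) hvec
    simpa only [inner_add_right, real_inner_smul_right] using h
  have hS2 : ∑ i, p i * (avgF n f (v' i) + θ₁ * Z (z' i)) ≤
      θ₁ * avgF n f xstar + (1/2) * avgF n f w + (1/2 - θ₁) * avgF n f v
      + (3/2) * θ₁^2 * Lbar n L * ‖z - xstar‖ ^ 2
      + (1/(4 * Lbar n L)) * (Ve n f' p x w - Ve n f' (pIS n L) x w) := by
    have hsc' : θ₁ * ⟪avgG n f' x, xstar - x⟫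
        ≤ θ₁ * (avgF n f xstar - avgF n f x - (μ/2) * ‖x - xstar‖^2) := by
      have h := hsc x xstar
      rw [norm_sub_rev xstar x] at h
      exact mul_le_mul_of_nonneg_left (by linarith) hθ₁0.le
    have hv'' : (1 - θ₁ - 1/2) * ⟪avgG n f' x, v - x⟫
        ≤ (1 - θ₁ - 1/2) * (avgF n f v - avgF n f x) :=
      mul_le_mul_of_nonneg_left (by linarith [hFconv x v]) (by linarith)
    have hw'' : (1/2) * ⟪avgG n f' x, w - x⟫ = (1/2) * (avgF n f w - avgF n f x)
        - (1/2) * (avgF n f w - avgF n f x - ⟪avgG n f' x, w - x⟫) := by ring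
    have hvarc : (1/(4 * Lbar n L)) * ∑ i, p i * ‖avgG n f' x - g i‖ ^ 2
        ≤ (1/(4 * Lbar n L)) * (Ve n f' p x w - Ve n f' (pIS n L) x w)
          + (1/2) * (avgF n f w - avgF n f x - ⟪avgG n f' x, w - x⟫) := by
      have hcpos : (0:ℝ) ≤ 1/(4*Lbar n L) := by positivity
      have c1 := mul_le_mul_of_nonneg_left hvar hcpos
      have c2 := mul_le_mul_of_nonneg_left hVeIS hcpos
      have c3 : (1/(4 * Lbar n L))
            * (2 * Lbar n L * (avgF n f w - avgF n f x - ⟪avgG n f' x, w - x⟫))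
          = (1/2) * (avgF n f w - avgF n f x - ⟪avgG n f' x, w - x⟫) := by
        field_simp; ring
      linarith [c1, c2, c3]
    linarith [hmaster, hxdecomp, hsc', hv'', hw'', hvarc]
  -- final assembly
  have hqv : (0:ℝ) ≤ avgF n f v - avgF n f xstar := by linarith [hmin v]
  have hqw : (0:ℝ) ≤ avgF n f w - avgF n f xstar := by linarith [hmin w]
  have hZznn : (0:ℝ) ≤ Z z := by
    rw [hZ z]; positivity
  have hα₂a : 1 / (1 + η * κ) ≤ α₂ := by
    rw [hα₂]; exact le_trans (le_max_left _ _) (le_max_left _ _)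
  have hα₂b : 1 - θ₁ / 2 ≤ α₂ := by
    rw [hα₂]; exact le_trans (le_max_right _ _) (le_max_left _ _)
  have hα₂c : 1 - ρ * θ₁ / (1 + θ₁) ≤ α₂ := by
    rw [hα₂]; exact le_max_right _ _
  have E1 : θ₁ * (∑ i, p i * (Z (z' i) + V (v' i)))
      = ∑ i, p i * (avgF n f (v' i) + θ₁ * Z (z' i)) - avgF n f xstar := by
    rw [Finset.mul_sum]
    have hterm : ∀ i : Fin n, θ₁ * (p i * (Z (z' i) + V (v' i)))
        = p i * (avgF n f (v' i) + θ₁ * Z (z' i)) - avgF n f xstar * p i := by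
      intro i
      rw [hV (v' i)]
      field_simp
      ring
    rw [Finset.sum_congr rfl fun i _ => hterm i, Finset.sum_sub_distrib,
      ← Finset.mul_sum, hp1, mul_one]
  have F4 : (3/2) * θ₁^2 * Lbar n L * ‖z - xstar‖^2 ≤ θ₁ * (α₂ * Z z) := by
    have e : (3/2) * θ₁^2 * Lbar n L * ‖z - xstar‖^2 = θ₁ * ((1/(1+η*κ)) * Z z) := by
      rw [hZ z, hηval]; field_simp
    rw [e]
    exact mul_le_mul_of_nonneg_left (mul_le_mul_of_nonneg_right hα₂a hZznn) hθ₁0.le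
  have F3 : (1/2 - θ₁) * (avgF n f v - avgF n f xstar) + θ₁ * (ρ * W v)
      ≤ θ₁ * (α₂ * V v) := by
    have e : θ₁ * (α₂ * V v)
        - ((1/2 - θ₁) * (avgF n f v - avgF n f xstar) + θ₁ * (ρ * W v))
        = (α₂ - (1 - θ₁/2)) * (avgF n f v - avgF n f xstar) := by
      rw [hV v, hW v]
      field_simp
      ring
    have h := mul_nonneg (by linarith [hα₂b] : (0:ℝ) ≤ α₂ - (1 - θ₁/2)) hqv
    linarith [e, h]
  have hkeyw : (1 + θ₁) - ρ * θ₁ ≤ α₂ * (1 + θ₁) := by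
    have h1θ : (0:ℝ) < 1 + θ₁ := by linarith
    have h := mul_le_mul_of_nonneg_right hα₂c h1θ.le
    have e : (1 - ρ * θ₁ / (1 + θ₁)) * (1 + θ₁) = (1 + θ₁) - ρ * θ₁ := by
      field_simp
    linarith [h, e]
  have F2 : (1/2) * (avgF n f w - avgF n f xstar) + θ₁ * ((1 - ρ) * W w)
      ≤ θ₁ * (α₂ * W w) := by
    have e : θ₁ * (α₂ * W w)
        - ((1/2) * (avgF n f w - avgF n f xstar) + θ₁ * ((1 - ρ) * W w))
        = ((avgF n f w - avgF n f xstar) / (2 * ρ))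
          * (α₂ * (1 + θ₁) - ((1 + θ₁) - ρ * θ₁)) := by
      rw [hW w]
      field_simp
      ring
    have h := mul_nonneg (div_nonneg hqw (by positivity : (0:ℝ) ≤ 2*ρ))
      (by linarith [hkeyw] : (0:ℝ) ≤ α₂ * (1 + θ₁) - ((1 + θ₁) - ρ * θ₁))
    linarith [e, h]
  have F5 : θ₁ * ((1 / (4 * Lbar n L * θ₁)) * (Ve n f' p x w - Ve n f' (pIS n L) x w))
      = (1/(4 * Lbar n L)) * (Ve n f' p x w - Ve n f' (pIS n L) x w) := by
    field_simp
  have final : θ₁ * (∑ i, p i * (Z (z' i) + V (v' i)) + (1 - ρ) * W w + ρ * W v)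
      ≤ θ₁ * (α₂ * (Z z + V v + W w)
        + (1 / (4 * Lbar n L * θ₁)) * (Ve n f' p x w - Ve n f' (pIS n L) x w)) := by
    have expand1 : θ₁ * (∑ i, p i * (Z (z' i) + V (v' i)) + (1 - ρ) * W w + ρ * W v)
        = θ₁ * (∑ i, p i * (Z (z' i) + V (v' i))) + θ₁ * ((1 - ρ) * W w)
          + θ₁ * (ρ * W v) := by ring
    have expand2 : θ₁ * (α₂ * (Z z + V v + W w)
          + (1 / (4 * Lbar n L * θ₁)) * (Ve n f' p x w - Ve n f' (pIS n L) x w))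
        = θ₁ * (α₂ * Z z) + θ₁ * (α₂ * V v) + θ₁ * (α₂ * W w)
          + θ₁ * ((1 / (4 * Lbar n L * θ₁)) * (Ve n f' p x w - Ve n f' (pIS n L) x w)) := by
      ring
    rw [expand1, expand2]
    linarith [E1, hS2, F2, F3, F4, F5]
  exact le_of_mul_le_mul_left final hθ₁0
end
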